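/- arXiv:1310.2371 — 8 statements merged into one kernel-verified Lean document; each statement's English description precedes it below -/
import Mathlib

section
/- A greedy basis is unconditional: if {x_i} is a Schauder basis of a Banach space X such that for some constant C, for every x = Σ a_i x_i, every n, and every n-element set A ⊂ ℕ with min_{i∈A} |a_i| ≥ max_{i∉A} |a_i|, one has ‖x − Σ_{i∈A} a_i x_i‖ ≤ C inf{‖x − Σ_{i∈B} b_i x_i‖ : |B| = n, b_i ∈ ℝ}, then {x_i} is an unconditional basis (there is K such that ‖Σ ε_i a_i x_i‖ ≤ K ‖Σ a_i x_i‖ for all signs ε_i = ±1 and all finitely supported scalars). -/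
open scoped ENNReal NNReal

/-- A greedy basis is unconditional: if `{x_i}` is a basis of a Banach space `X`
(here: a sequence with dense span, with vectors `Σ aᵢ xᵢ` encoded by finitely supported
coefficient sequences) such that for some `C`, for every `x = Σ aᵢ xᵢ`, every set `A`
whose coefficients dominate all the others, and every set `B` with `|B| = |A|` and
scalars `b`, `‖x − Σ_{i∈A} aᵢ xᵢ‖ ≤ C ‖x − Σ_{i∈B} bᵢ xᵢ‖`, then `{x_i}` is
unconditional: there is `K` with `‖Σ εᵢ aᵢ xᵢ‖ ≤ K ‖Σ aᵢ xᵢ‖` for all signs `εᵢ = ±1`. -/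
theorem stmt_8 {X : Type*} [NormedAddCommGroup X] [NormedSpace ℝ X] [CompleteSpace X]
    (x : ℕ → X)
    (hspan : Dense (Submodule.span ℝ (Set.range x) : Set X))
    (C : ℝ)
    (hgreedy : ∀ (a : ℕ →₀ ℝ) (A : Finset ℕ),
      (∀ i ∈ A, ∀ j ∉ A, |a j| ≤ |a i|) →
      ∀ B : Finset ℕ, B.card = A.card → ∀ b : ℕ → ℝ,
        ‖(a.sum fun i c => c • x i) - ∑ i ∈ A, a i • x i‖
          ≤ C * ‖(a.sum fun i c => c • x i) - ∑ i ∈ B, b i • x i‖) :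
    ∃ K : ℝ, ∀ (a : ℕ →₀ ℝ) (ε : ℕ → ℝ), (∀ i, ε i = 1 ∨ ε i = -1) →
      ‖a.sum fun i c => (ε i * c) • x i‖ ≤ K * ‖a.sum fun i c => c • x i‖ := by
  -- Key claim: tail projections are bounded by C times the norm
  have key : ∀ (a : ℕ →₀ ℝ) (A : Finset ℕ),
      ‖∑ i ∈ a.support \ A, a i • x i‖ ≤ C * ‖a.sum fun i c => c • x i‖ := by
    intro a A
    classical
    set M : ℝ := 1 + ∑ i ∈ a.support, |a i| with hM
    have hMpos : 0 < M := by
      have : (0:ℝ) ≤ ∑ i ∈ a.support, |a i| :=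
        Finset.sum_nonneg fun i _ => abs_nonneg _
      linarith
    have habs : ∀ j, |a j| ≤ M := by
      intro j
      by_cases hj : j ∈ a.support
      · have := Finset.single_le_sum (f := fun i => |a i|)
          (fun i _ => abs_nonneg _) hj
        linarith
      · have : a j = 0 := Finsupp.notMem_support_iff.mp hj
        rw [this]; simp; linarith
    set S : Finset ℕ := a.support ∪ A with hS
    set a' : ℕ →₀ ℝ := Finsupp.onFinset S (fun i => if i ∈ A then M else a i)
      (by
        intro i hi
        by_contra hiS
        have hiA : i ∉ A := fun h => hiS (Finset.mem_union_right _ h)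
        have hia : a i = 0 := by
          by_contra h
          exact hiS (Finset.mem_union_left _ (Finsupp.mem_support_iff.mpr h))
        simp [if_neg hiA, hia] at hi) with ha'
    have ha'app : ∀ i, a' i = if i ∈ A then M else a i := fun i => rfl
    have hAS : A ⊆ S := Finset.subset_union_right
    have hsuppS : a.support ⊆ S := Finset.subset_union_left
    have hsum : (a.sum fun i c => c • x i) = ∑ i ∈ S, a i • x i :=
      Finsupp.sum_of_support_subset a hsuppS _ (fun i _ => zero_smul ℝ (x i))
    have hsum' : (a'.sum fun i c => c • x i) = ∑ i ∈ S, a' i • x i :=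
      Finsupp.sum_of_support_subset a' Finsupp.support_onFinset_subset _
        (fun i _ => zero_smul ℝ (x i))
    have hSA : S \ A = a.support \ A := by
      ext i; simp [hS, Finset.mem_sdiff, Finset.mem_union]; tauto
    have hcond : ∀ i ∈ A, ∀ j ∉ A, |a' j| ≤ |a' i| := by
      intro i hi j hj
      rw [ha'app, ha'app, if_pos hi, if_neg hj, abs_of_pos hMpos]
      exact habs j
    have H := hgreedy a' A hcond A rfl (fun i => M - a i)
    -- rewrite LHS of H
    have hL : (a'.sum fun i c => c • x i) - ∑ i ∈ A, a' i • x i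
        = ∑ i ∈ a.support \ A, a i • x i := by
      rw [hsum', ← Finset.sum_sdiff_eq_sub hAS, hSA]
      apply Finset.sum_congr rfl
      intro i hi
      rw [ha'app, if_neg (Finset.mem_sdiff.mp hi).2]
    have hR : (a'.sum fun i c => c • x i) - ∑ i ∈ A, (M - a i) • x i
        = a.sum fun i c => c • x i := by
      rw [hsum', hsum, ← Finset.sum_sdiff hAS, ← Finset.sum_sdiff hAS]
      have h1 : ∑ i ∈ S \ A, a' i • x i = ∑ i ∈ S \ A, a i • x i := by
        apply Finset.sum_congr rfl
        intro i hi
        rw [ha'app, if_neg (Finset.mem_sdiff.mp hi).2]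
      have h2 : ∑ i ∈ A, a' i • x i = ∑ i ∈ A, M • x i := by
        apply Finset.sum_congr rfl
        intro i hi
        rw [ha'app, if_pos hi]
      rw [h1, h2]
      rw [show ∀ (u v w : X), u + v - w = u + (v - w) from fun u v w => by abel]
      congr 1
      rw [← Finset.sum_sub_distrib]
      apply Finset.sum_congr rfl
      intro i hi
      rw [← sub_smul]
      ring_nf
    rw [hL, hR] at H
    exact H
  refine ⟨1 + 2 * |C|, ?_⟩
  intro a ε hε
  classical
  set N : Finset ℕ := a.support.filter (fun i => ε i = -1) with hN
  have hNsub : N ⊆ a.support := Finset.filter_subset _ _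
  have hsum : (a.sum fun i c => c • x i)
      = ∑ i ∈ a.support \ N, a i • x i + ∑ i ∈ N, a i • x i :=
    (Finset.sum_sdiff hNsub).symm
  have hεsum : (a.sum fun i c => (ε i * c) • x i)
      = ∑ i ∈ a.support \ N, a i • x i - ∑ i ∈ N, a i • x i := by
    have h1 : ∑ i ∈ a.support \ N, (ε i * a i) • x i
        = ∑ i ∈ a.support \ N, a i • x i := by
      apply Finset.sum_congr rfl
      intro i hi
      have hi2 := (Finset.mem_sdiff.mp hi).2
      have : ε i = 1 := by
        rcases hε i with h | h
        · exact h
        · exact absurd (Finset.mem_filter.mpr ⟨(Finset.mem_sdiff.mp hi).1, h⟩) hi2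
      rw [this, one_mul]
    have h2 : ∑ i ∈ N, (ε i * a i) • x i = - ∑ i ∈ N, a i • x i := by
      rw [← Finset.sum_neg_distrib]
      apply Finset.sum_congr rfl
      intro i hi
      have : ε i = -1 := (Finset.mem_filter.mp hi).2
      rw [this, neg_one_mul, neg_smul]
    rw [Finsupp.sum, ← Finset.sum_sdiff hNsub, h1, h2, ← sub_eq_add_neg]
  have hkey := key a (a.support \ N)
  rw [Finset.sdiff_sdiff_self_left, Finset.inter_eq_right.mpr hNsub] at hkey
  have hx : ‖∑ i ∈ a.support \ N, a i • x i - ∑ i ∈ N, a i • x i‖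
      ≤ ‖a.sum fun i c => c • x i‖ + 2 * ‖∑ i ∈ N, a i • x i‖ := by
    have : (∑ i ∈ a.support \ N, a i • x i - ∑ i ∈ N, a i • x i)
        = (a.sum fun i c => c • x i) - (2:ℝ) • ∑ i ∈ N, a i • x i := by
      rw [hsum]; module
    rw [this]
    calc ‖(a.sum fun i c => c • x i) - (2:ℝ) • ∑ i ∈ N, a i • x i‖
        ≤ ‖a.sum fun i c => c • x i‖ + ‖(2:ℝ) • ∑ i ∈ N, a i • x i‖ := norm_sub_le _ _
      _ = ‖a.sum fun i c => c • x i‖ + 2 * ‖∑ i ∈ N, a i • x i‖ := by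
          rw [norm_smul]; norm_num
  rw [hεsum]
  have hC : C * ‖a.sum fun i c => c • x i‖ ≤ |C| * ‖a.sum fun i c => c • x i‖ :=
    mul_le_mul_of_nonneg_right (le_abs_self C) (norm_nonneg _)
  have hn : (0:ℝ) ≤ ‖a.sum fun i c => c • x i‖ := norm_nonneg _
  nlinarith [hkey, hx]
end

section
/- A greedy basis is democratic: if {x_i} is a normalized Schauder basis of a Banach space X which is greedy with constant C (as in the Konyagin–Temlyakov definition), then there is a constant D such that for all finite sets A, B ⊂ ℕ with |A| = |B|, ‖Σ_{i∈A} x_i‖ ≤ D ‖Σ_{i∈B} x_i‖. -/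
open scoped ENNReal NNReal

/-- A greedy basis is democratic: if `{x_i}` is a normalized basis of a Banach space `X`
(vectors `Σ aᵢ xᵢ` encoded by finitely supported coefficient sequences) which is greedy
with constant `C` in the Konyagin–Temlyakov sense, then there is `D` such that
`‖Σ_{i∈A} xᵢ‖ ≤ D ‖Σ_{i∈B} xᵢ‖` for all finite `A, B ⊆ ℕ` with `|A| = |B|`. -/
theorem stmt_9 {X : Type*} [NormedAddCommGroup X] [NormedSpace ℝ X] [CompleteSpace X]
    (x : ℕ → X) (hnorm : ∀ i, ‖x i‖ = 1)
    (hspan : Dense (Submodule.span ℝ (Set.range x) : Set X))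
    (C : ℝ)
    (hgreedy : ∀ (a : ℕ →₀ ℝ) (A : Finset ℕ),
      (∀ i ∈ A, ∀ j ∉ A, |a j| ≤ |a i|) →
      ∀ B : Finset ℕ, B.card = A.card → ∀ b : ℕ → ℝ,
        ‖(a.sum fun i c => c • x i) - ∑ i ∈ A, a i • x i‖
          ≤ C * ‖(a.sum fun i c => c • x i) - ∑ i ∈ B, b i • x i‖) :
    ∃ D : ℝ, ∀ A B : Finset ℕ, A.card = B.card →
      ‖∑ i ∈ A, x i‖ ≤ D * ‖∑ i ∈ B, x i‖ := by
  -- First, C ≥ 1.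
  have hC : 1 ≤ C := by
    have := hgreedy (Finsupp.single 0 1) ∅ (by simp) ∅ rfl 0
    simpa [Finsupp.sum_single_index, hnorm 0] using this
  have hC0 : 0 ≤ C := le_trans zero_le_one hC
  -- Key lemma: for disjoint sets of equal cardinality.
  have key : ∀ A E : Finset ℕ, Disjoint A E → A.card = E.card →
      ‖∑ i ∈ A, x i‖ ≤ C * ‖∑ i ∈ E, x i‖ := by
    intro A E hdisj hcard
    set a : ℕ →₀ ℝ := Finsupp.indicator (A ∪ E) (fun _ _ => (1:ℝ)) with ha
    have hsum : (a.sum fun i c => c • x i) = ∑ i ∈ A ∪ E, x i := by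
      rw [ha, Finsupp.sum_indicator_index _ (by simp)]
      simp
    have hgr : ∀ i ∈ E, ∀ j ∉ E, |a j| ≤ |a i| := by
      intro i hi j hj
      have hai : a i = 1 := Finsupp.indicator_of_mem (Finset.mem_union_right _ hi) _
      rw [hai]
      rcases Finset.decidableMem j (A ∪ E) with h | h
      · simp [ha, Finsupp.indicator_of_notMem h]
      · have : a j = 1 := Finsupp.indicator_of_mem h _
        simp [this]
    have := hgreedy a E hgr A hcard 1
    have hE : ∀ i ∈ E, a i • x i = x i := by
      intro i hi
      rw [Finsupp.indicator_of_mem (Finset.mem_union_right _ hi), one_smul]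
    have hAE : ∑ i ∈ A ∪ E, x i = ∑ i ∈ A, x i + ∑ i ∈ E, x i :=
      Finset.sum_union hdisj
    rw [hsum, Finset.sum_congr rfl hE, hAE] at this
    simpa using this
  refine ⟨C * C, fun A B hcard => ?_⟩
  -- Choose a set E disjoint from A ∪ B with the same cardinality.
  set N : ℕ := (A ∪ B).sup id + 1 with hN
  set E : Finset ℕ := Finset.Ico N (N + A.card) with hE
  have hEcard : E.card = A.card := by simp [hE]
  have hdis : ∀ S : Finset ℕ, S ⊆ A ∪ B → Disjoint S E := by
    intro S hS
    rw [Finset.disjoint_left]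
    intro i hi hiE
    have h1 : i ≤ (A ∪ B).sup id := Finset.le_sup (f := id) (hS hi)
    have h2 : N ≤ i := (Finset.mem_Ico.mp hiE).1
    omega
  have h1 : ‖∑ i ∈ A, x i‖ ≤ C * ‖∑ i ∈ E, x i‖ :=
    key A E (hdis A Finset.subset_union_left) hEcard.symm
  have h2 : ‖∑ i ∈ E, x i‖ ≤ C * ‖∑ i ∈ B, x i‖ :=
    key E B ((hdis B Finset.subset_union_right).symm) (by omega)
  calc ‖∑ i ∈ A, x i‖ ≤ C * ‖∑ i ∈ E, x i‖ := h1
    _ ≤ C * (C * ‖∑ i ∈ B, x i‖) := by nlinarith [norm_nonneg (∑ i ∈ E, x i)]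
    _ = C * C * ‖∑ i ∈ B, x i‖ := by ring
end

section
/- Konyagin–Temlyakov criterion (sufficiency): if a normalized Schauder basis {x_i} of a Banach space X is unconditional (with constant K) and democratic (with constant D), then it is greedy: there exists C = C(K,D) such that for all x = Σ a_i x_i, all n, and all n-element sets A with min_{i∈A}|a_i| ≥ max_{i∉A}|a_i|, ‖x − Σ_{i∈A} a_i x_i‖ ≤ C inf{‖x − Σ_{i∈B} b_i x_i‖ : |B| = n, b_i ∈ ℝ}. -/
open scoped ENNReal NNReal

open Finset

/-- Convexity: a point of the cube can be replaced by a vertex without decreasing the norm. -/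
lemma cube_lemma {X : Type*} [NormedAddCommGroup X] [NormedSpace ℝ X] (f : ℕ → X) :
    ∀ (s : Finset ℕ) (v : X) (c : ℕ → ℝ), (∀ i ∈ s, |c i| ≤ 1) →
    ∃ ε : ℕ → ℝ, (∀ i, ε i = 1 ∨ ε i = -1) ∧
      ‖v + ∑ i ∈ s, c i • f i‖ ≤ ‖v + ∑ i ∈ s, ε i • f i‖ := by
  classical
  intro s
  induction s using Finset.induction_on with
  | empty => intro v c _; exact ⟨fun _ => 1, fun _ => Or.inl rfl, by simp⟩
  | @insert j t hj IH =>
    intro v c hc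
    obtain ⟨ε, hε, h1⟩ := IH (v + c j • f j) c (fun i hi => hc i (mem_insert_of_mem hi))
    set w := v + ∑ i ∈ t, ε i • f i with hw
    have hcj : |c j| ≤ 1 := hc j (mem_insert_self _ _)
    rw [abs_le] at hcj
    have key : ‖w + c j • f j‖ ≤ max ‖w + f j‖ ‖w - f j‖ := by
      set t0 := (1 + c j) / 2 with ht0def
      have ht0 : 0 ≤ t0 := by simp only [ht0def]; linarith [hcj.1]
      have ht1 : t0 ≤ 1 := by simp only [ht0def]; linarith [hcj.2]
      have hrepr : w + c j • f j = t0 • (w + f j) + (1 - t0) • (w - f j) := by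
        simp only [ht0def]; match_scalars <;> ring
      rw [hrepr]
      have hstep : ‖t0 • (w + f j) + (1 - t0) • (w - f j)‖
          ≤ t0 * ‖w + f j‖ + (1 - t0) * ‖w - f j‖ := by
        refine (norm_add_le _ _).trans ?_
        rw [norm_smul, norm_smul, Real.norm_eq_abs, Real.norm_eq_abs,
          abs_of_nonneg ht0, abs_of_nonneg (by linarith)]
      have hl := le_max_left ‖w + f j‖ ‖w - f j‖
      have hr := le_max_right ‖w + f j‖ ‖w - f j‖
      nlinarith
    rcases le_or_gt ‖w - f j‖ ‖w + f j‖ with hm | hm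
    · refine ⟨Function.update ε j 1, ?_, ?_⟩
      · intro i
        rcases eq_or_ne i j with rfl | h
        · simp
        · simpa [Function.update_of_ne h] using hε i
      · rw [Finset.sum_insert hj, Finset.sum_insert hj]
        have hsum : ∑ i ∈ t, Function.update ε j 1 i • f i = ∑ i ∈ t, ε i • f i :=
          Finset.sum_congr rfl fun i hi => by
            rw [Function.update_of_ne (ne_of_mem_of_not_mem hi hj)]
        rw [hsum, Function.update_self]
        calc ‖v + (c j • f j + ∑ i ∈ t, c i • f i)‖
            = ‖v + c j • f j + ∑ i ∈ t, c i • f i‖ := by rw [add_assoc]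
          _ ≤ ‖v + c j • f j + ∑ i ∈ t, ε i • f i‖ := h1
          _ = ‖w + c j • f j‖ := by rw [hw]; congr 1; module
          _ ≤ ‖w + f j‖ := key.trans (max_le le_rfl hm)
          _ = ‖v + ((1:ℝ) • f j + ∑ i ∈ t, ε i • f i)‖ := by rw [hw]; congr 1; module
    · refine ⟨Function.update ε j (-1), ?_, ?_⟩
      · intro i
        rcases eq_or_ne i j with rfl | h
        · simp
        · simpa [Function.update_of_ne h] using hε i
      · rw [Finset.sum_insert hj, Finset.sum_insert hj]
        have hsum : ∑ i ∈ t, Function.update ε j (-1) i • f i = ∑ i ∈ t, ε i • f i :=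
          Finset.sum_congr rfl fun i hi => by
            rw [Function.update_of_ne (ne_of_mem_of_not_mem hi hj)]
        rw [hsum, Function.update_self]
        calc ‖v + (c j • f j + ∑ i ∈ t, c i • f i)‖
            = ‖v + c j • f j + ∑ i ∈ t, c i • f i‖ := by rw [add_assoc]
          _ ≤ ‖v + c j • f j + ∑ i ∈ t, ε i • f i‖ := h1
          _ = ‖w + c j • f j‖ := by rw [hw]; congr 1; module
          _ ≤ ‖w - f j‖ := key.trans (max_le hm.le le_rfl)
          _ = ‖v + ((-1:ℝ) • f j + ∑ i ∈ t, ε i • f i)‖ := by rw [hw]; congr 1; module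

/-- Konyagin–Temlyakov criterion (sufficiency): if a normalized basis `{x_i}` of a
Banach space `X` (vectors `Σ aᵢ xᵢ` encoded by finitely supported coefficient
sequences) is unconditional with constant `K` and democratic with constant `D`, then
it is greedy: there exists `C = C(K,D)` such that for every `x = Σ aᵢ xᵢ`, every set
`A` whose coefficients dominate all the others, and every `B` with `|B| = |A|` and
scalars `b`, `‖x − Σ_{i∈A} aᵢ xᵢ‖ ≤ C ‖x − Σ_{i∈B} bᵢ xᵢ‖`. -/
theorem stmt_10 {X : Type*} [NormedAddCommGroup X] [NormedSpace ℝ X] [CompleteSpace X]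
    (x : ℕ → X) (hnorm : ∀ i, ‖x i‖ = 1)
    (hspan : Dense (Submodule.span ℝ (Set.range x) : Set X))
    (K D : ℝ)
    (huncond : ∀ (a : ℕ →₀ ℝ) (ε : ℕ → ℝ), (∀ i, ε i = 1 ∨ ε i = -1) →
      ‖a.sum fun i c => (ε i * c) • x i‖ ≤ K * ‖a.sum fun i c => c • x i‖)
    (hdem : ∀ A B : Finset ℕ, A.card = B.card →
      ‖∑ i ∈ A, x i‖ ≤ D * ‖∑ i ∈ B, x i‖) :
    ∃ C : ℝ, ∀ (a : ℕ →₀ ℝ) (A : Finset ℕ),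
      (∀ i ∈ A, ∀ j ∉ A, |a j| ≤ |a i|) →
      ∀ B : Finset ℕ, B.card = A.card → ∀ b : ℕ → ℝ,
        ‖(a.sum fun i c => c • x i) - ∑ i ∈ A, a i • x i‖
          ≤ C * ‖(a.sum fun i c => c • x i) - ∑ i ∈ B, b i • x i‖ := by
  classical
  -- K ≥ 1
  have hK1 : 1 ≤ K := by
    have h := huncond (Finsupp.single 0 1) (fun _ => 1) (fun _ => Or.inl rfl)
    rw [Finsupp.sum_single_index (by simp), Finsupp.sum_single_index (by simp)] at h
    simpa [hnorm 0] using h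
  have hK0 : 0 ≤ K := by linarith
  have hD1 : 1 ≤ D := by
    have h := hdem {0} {0} rfl
    simpa [hnorm 0] using h
  have hD0 : 0 ≤ D := by linarith
  -- unconditionality for finset sums
  have hu' : ∀ (s : Finset ℕ) (c ε : ℕ → ℝ), (∀ i, ε i = 1 ∨ ε i = -1) →
      ‖∑ i ∈ s, (ε i * c i) • x i‖ ≤ K * ‖∑ i ∈ s, c i • x i‖ := by
    intro s c ε hε
    set a : ℕ →₀ ℝ := Finsupp.onFinset s (fun i => if i ∈ s then c i else 0)
      (fun i h => by by_contra hc; simp [hc] at h) with ha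
    have hsupp : a.support ⊆ s := Finsupp.support_onFinset_subset
    have h1 : (a.sum fun i c => (ε i * c) • x i) = ∑ i ∈ s, (ε i * c i) • x i := by
      rw [Finsupp.sum_of_support_subset a hsupp _ (fun i _ => by simp)]
      exact Finset.sum_congr rfl fun i hi => by simp [ha, hi]
    have h2 : (a.sum fun i c => c • x i) = ∑ i ∈ s, c i • x i := by
      rw [Finsupp.sum_of_support_subset a hsupp _ (fun i _ => by simp)]
      exact Finset.sum_congr rfl fun i hi => by simp [ha, hi]
    have h := huncond a ε hε
    rwa [h1, h2] at h
  -- projection bound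
  have hproj : ∀ (s t : Finset ℕ) (c : ℕ → ℝ), t ⊆ s →
      ‖∑ i ∈ t, c i • x i‖ ≤ K * ‖∑ i ∈ s, c i • x i‖ := by
    intro s t c hts
    set ε : ℕ → ℝ := fun i => if i ∈ t then 1 else -1 with hεdef
    have hε : ∀ i, ε i = 1 ∨ ε i = -1 := fun i => by
      by_cases h : i ∈ t <;> simp [hεdef, h]
    have hrepr : ∑ i ∈ t, c i • x i
        = (1/2 : ℝ) • (∑ i ∈ s, c i • x i + ∑ i ∈ s, (ε i * c i) • x i) := by
      rw [← Finset.sum_add_distrib, Finset.smul_sum]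
      have : ∀ i ∈ s, (1/2 : ℝ) • (c i • x i + (ε i * c i) • x i)
          = if i ∈ t then c i • x i else 0 := by
        intro i _
        by_cases h : i ∈ t
        · simp only [hεdef, h, if_true, one_mul]; module
        · simp only [hεdef, h, if_false, neg_one_mul]; module
      rw [Finset.sum_congr rfl this, Finset.sum_ite_mem, Finset.inter_eq_right.mpr hts]
    rw [hrepr]
    have hn : ‖(1/2 : ℝ) • (∑ i ∈ s, c i • x i + ∑ i ∈ s, (ε i * c i) • x i)‖
        ≤ (1/2 : ℝ) * (‖∑ i ∈ s, c i • x i‖ + ‖∑ i ∈ s, (ε i * c i) • x i‖) := by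
      rw [norm_smul, Real.norm_eq_abs]
      rw [abs_of_nonneg (by norm_num)]
      gcongr
      exact norm_add_le _ _
    have h2 := hu' s c ε hε
    have h3 := norm_nonneg (∑ i ∈ s, c i • x i)
    nlinarith
  -- scaled unconditionality
  have hscale : ∀ (s : Finset ℕ) (c d : ℕ → ℝ), (∀ i ∈ s, |c i| ≤ 1) →
      ‖∑ i ∈ s, (c i * d i) • x i‖ ≤ K * ‖∑ i ∈ s, d i • x i‖ := by
    intro s c d hc
    obtain ⟨ε, hε, hle⟩ := cube_lemma (fun i => d i • x i) s 0 c hc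
    simp only [zero_add] at hle
    calc ‖∑ i ∈ s, (c i * d i) • x i‖
        = ‖∑ i ∈ s, c i • d i • x i‖ := by simp [smul_smul]
      _ ≤ ‖∑ i ∈ s, ε i • d i • x i‖ := hle
      _ = ‖∑ i ∈ s, (ε i * d i) • x i‖ := by simp [smul_smul]
      _ ≤ K * ‖∑ i ∈ s, d i • x i‖ := hu' s d ε hε
  refine ⟨K + K^3 * D, ?_⟩
  intro a A hgreedy B hcard b
  set s : Finset ℕ := a.support ∪ A ∪ B with hsdef
  have hAs : A ⊆ s := fun i hi => by simp [hsdef, hi]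
  have hBs : B ⊆ s := fun i hi => by simp [hsdef, hi]
  have hsupps : a.support ⊆ s := fun i hi => by simp [hsdef, hi]
  have hxa : (a.sum fun i c => c • x i) = ∑ i ∈ s, a i • x i :=
    Finsupp.sum_of_support_subset a hsupps _ (fun i _ => zero_smul ℝ _)
  set c : ℕ → ℝ := fun i => a i - (if i ∈ B then b i else 0) with hcdef
  set z : X := ∑ i ∈ s, c i • x i with hzdef
  have hz : (a.sum fun i c => c • x i) - ∑ i ∈ B, b i • x i = z := by
    rw [hxa, hzdef]
    have hB : ∑ i ∈ B, b i • x i = ∑ i ∈ s, (if i ∈ B then b i else 0) • x i := by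
      have : ∀ i ∈ s, (if i ∈ B then b i else 0) • x i
          = if i ∈ B then b i • x i else 0 := by
        intro i _; by_cases h : i ∈ B <;> simp [h]
      rw [Finset.sum_congr rfl this, Finset.sum_ite_mem, Finset.inter_eq_right.mpr hBs]
    rw [hB, ← Finset.sum_sub_distrib]
    exact Finset.sum_congr rfl fun i _ => (sub_smul _ _ _).symm
  have hG : (a.sum fun i c => c • x i) - ∑ i ∈ A, a i • x i
      = ∑ i ∈ s \ A, a i • x i := by
    rw [hxa, ← Finset.sum_sdiff hAs, add_sub_cancel_right]
  rw [hG, hz]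
  have hsplit : s \ A = (s \ (A ∪ B)) ∪ (B \ A) := by
    ext i
    simp only [Finset.mem_sdiff, Finset.mem_union]
    constructor
    · rintro ⟨hi, hiA⟩
      by_cases hB : i ∈ B
      · exact Or.inr ⟨hB, hiA⟩
      · exact Or.inl ⟨hi, fun h => h.elim hiA hB⟩
    · rintro (⟨hi, h⟩ | ⟨hB, hA⟩)
      · exact ⟨hi, fun hA => h (Or.inl hA)⟩
      · exact ⟨hBs hB, hA⟩
  have hdisj : Disjoint (s \ (A ∪ B)) (B \ A) := by
    rw [Finset.disjoint_left]
    intro i hi hi2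
    simp only [Finset.mem_sdiff, Finset.mem_union] at hi hi2
    exact hi.2 (Or.inr hi2.1)
  have hT1 : ‖∑ i ∈ s \ (A ∪ B), a i • x i‖ ≤ K * ‖z‖ := by
    have heq : ∑ i ∈ s \ (A ∪ B), a i • x i = ∑ i ∈ s \ (A ∪ B), c i • x i := by
      refine Finset.sum_congr rfl fun i hi => ?_
      simp only [Finset.mem_sdiff, Finset.mem_union] at hi
      have : i ∉ B := fun h => hi.2 (Or.inr h)
      simp [hcdef, this]
    rw [heq, hzdef]
    exact hproj s _ c (Finset.sdiff_subset)
  have hcard' : (B \ A).card = (A \ B).card := Finset.card_sdiff_comm hcard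
  have hT2 : ‖∑ i ∈ B \ A, a i • x i‖ ≤ K^3 * D * ‖z‖ := by
    rcases (A \ B).eq_empty_or_nonempty with hAe | hAne
    · have hBe : B \ A = ∅ := Finset.card_eq_zero.mp (by rw [hcard', hAe]; simp)
      rw [hBe]
      simp only [Finset.sum_empty, norm_zero]
      positivity
    · obtain ⟨i0, hi0, hmin⟩ := Finset.exists_min_image (A \ B) (fun i => |a i|) hAne
      set β := |a i0| with hβdef
      have hi0A : i0 ∈ A := (Finset.mem_sdiff.mp hi0).1
      have hβB' : ∀ i ∈ B \ A, |a i| ≤ β :=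
        fun i hi => hgreedy i0 hi0A i (Finset.mem_sdiff.mp hi).2
      by_cases hβ0 : β = 0
      · have : ∀ i ∈ B \ A, a i • x i = 0 := by
          intro i hi
          have := hβB' i hi
          rw [hβ0] at this
          have : a i = 0 := abs_nonpos_iff.mp this
          simp [this]
        rw [Finset.sum_congr rfl this]
        simp only [Finset.sum_const_zero, norm_zero]
        positivity
      · have hβ : 0 < β := lt_of_le_of_ne (abs_nonneg _) (Ne.symm hβ0)
        -- step 1
        have h1 : ‖∑ i ∈ B \ A, a i • x i‖ ≤ K * (β * ‖∑ i ∈ B \ A, x i‖) := by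
          have := hscale (B \ A) (fun i => a i / β) (fun _ => β) (fun i hi => by
            rw [abs_div, hβdef, abs_abs]
            exact div_le_one_of_le₀ (hβB' i hi) (abs_nonneg _))
          simp only [div_mul_cancel₀ _ hβ0] at this
          calc ‖∑ i ∈ B \ A, a i • x i‖
              ≤ K * ‖∑ i ∈ B \ A, β • x i‖ := this
            _ = K * (β * ‖∑ i ∈ B \ A, x i‖) := by
                rw [← Finset.smul_sum, norm_smul, Real.norm_eq_abs, abs_of_pos hβ]
        -- step 2
        have h2 : ‖∑ i ∈ B \ A, x i‖ ≤ D * ‖∑ i ∈ A \ B, x i‖ := hdem _ _ hcard'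
        -- step 3
        have h3 : β * ‖∑ i ∈ A \ B, x i‖ ≤ K * ‖∑ i ∈ A \ B, a i • x i‖ := by
          have hne : ∀ i ∈ A \ B, a i ≠ 0 := by
            intro i hi h
            have := hmin i hi
            rw [h, abs_zero] at this
            exact absurd (le_antisymm this hβ.le) hβ0
          have := hscale (A \ B) (fun i => β / a i) a (fun i hi => by
            rw [abs_div, abs_of_pos hβ]
            exact div_le_one_of_le₀ (hmin i hi) (abs_nonneg _))
          have heq : ∑ i ∈ A \ B, (β / a i * a i) • x i = ∑ i ∈ A \ B, β • x i :=
            Finset.sum_congr rfl fun i hi => by rw [div_mul_cancel₀ _ (hne i hi)]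
          rw [heq, ← Finset.smul_sum, norm_smul, Real.norm_eq_abs, abs_of_pos hβ] at this
          exact this
        -- step 4
        have h4 : ‖∑ i ∈ A \ B, a i • x i‖ ≤ K * ‖z‖ := by
          have heq : ∑ i ∈ A \ B, a i • x i = ∑ i ∈ A \ B, c i • x i := by
            refine Finset.sum_congr rfl fun i hi => ?_
            have : i ∉ B := (Finset.mem_sdiff.mp hi).2
            simp [hcdef, this]
          rw [heq, hzdef]
          exact hproj s _ c ((Finset.sdiff_subset).trans hAs)
        calc ‖∑ i ∈ B \ A, a i • x i‖
            ≤ K * (β * ‖∑ i ∈ B \ A, x i‖) := h1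
          _ ≤ K * (β * (D * ‖∑ i ∈ A \ B, x i‖)) := by gcongr
          _ = K * D * (β * ‖∑ i ∈ A \ B, x i‖) := by ring
          _ ≤ K * D * (K * ‖∑ i ∈ A \ B, a i • x i‖) := by gcongr
          _ ≤ K * D * (K * (K * ‖z‖)) := by gcongr
          _ = K^3 * D * ‖z‖ := by ring
  calc ‖∑ i ∈ s \ A, a i • x i‖
      = ‖∑ i ∈ s \ (A ∪ B), a i • x i + ∑ i ∈ B \ A, a i • x i‖ := by
        rw [hsplit, Finset.sum_union hdisj]
    _ ≤ ‖∑ i ∈ s \ (A ∪ B), a i • x i‖ + ‖∑ i ∈ B \ A, a i • x i‖ := norm_add_le _ _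
    _ ≤ K * ‖z‖ + K^3 * D * ‖z‖ := add_le_add hT1 hT2
    _ = (K + K^3 * D) * ‖z‖ := by ring
end

section
/- Every bounded linear operator from ℓ_p, with 2 < p < ∞, to ℓ_2 is compact. -/
open scoped ENNReal NNReal
open Filter Topology

set_option linter.unusedSectionVars false


section aux
variable {p : ℝ≥0∞} [Fact (1 ≤ p)]

lemma aux_single_add (i : ℕ) (a b : ℝ) :
    lp.single (E := fun _ : ℕ => ℝ) p i (a + b) = lp.single p i a + lp.single p i b := by
  refine lp.ext (funext fun j => ?_)
  by_cases h : j = i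
  · subst h; simp [lp.single_apply_self]
  · simp [lp.single_apply_ne p i _ h, lp.coeFn_add]

noncomputable def auxEval (p : ℝ≥0∞) [Fact (1 ≤ p)] (i : ℕ) :
    lp (fun _ : ℕ => ℝ) p →L[ℝ] ℝ :=
  LinearMap.mkContinuous
    { toFun := fun f => f i
      map_add' := fun f g => by simp [lp.coeFn_add]
      map_smul' := fun c f => by simp [lp.coeFn_smul] }
    1 (fun f => by
      show ‖(f : ∀ _ : ℕ, ℝ) i‖ ≤ 1 * ‖f‖; simpa using lp.norm_apply_le_norm (by
        have : (1:ℝ≥0∞) ≤ p := Fact.out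
        exact fun h => by simp [h] at this) f i)

noncomputable def auxSingle (p : ℝ≥0∞) [Fact (1 ≤ p)] (hp : 0 < p.toReal) (i : ℕ) :
    ℝ →L[ℝ] lp (fun _ : ℕ => ℝ) p :=
  LinearMap.mkContinuous
    { toFun := fun c => lp.single p i c
      map_add' := fun a b => aux_single_add i a b
      map_smul' := fun c a => by
        simpa using lp.single_smul (E := fun _ : ℕ => ℝ) (𝕜 := ℝ) p i c a }
    1 (fun c => by
      rw [one_mul]
      show ‖lp.single (E := fun _ : ℕ => ℝ) p i c‖ ≤ ‖c‖; exact le_of_eq (lp.norm_single (E := fun _ : ℕ => ℝ) (ENNReal.toReal_pos_iff.1 hp).1 i c))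

noncomputable def auxProj (p : ℝ≥0∞) [Fact (1 ≤ p)] (hp : 0 < p.toReal) (n : ℕ) :
    lp (fun _ : ℕ => ℝ) p →L[ℝ] lp (fun _ : ℕ => ℝ) p :=
  ∑ i ∈ Finset.range n, (auxSingle p hp i).comp (auxEval p i)

lemma auxProj_apply (hp : 0 < p.toReal) (n : ℕ) (f : lp (fun _ : ℕ => ℝ) p) :
    auxProj p hp n f = ∑ i ∈ Finset.range n, lp.single p i (f i) := by
  simp only [auxProj, ContinuousLinearMap.sum_apply, ContinuousLinearMap.comp_apply]
  rfl

lemma auxProj_coe (hp : 0 < p.toReal) (n : ℕ) (f : lp (fun _ : ℕ => ℝ) p) (j : ℕ) :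
    (auxProj p hp n f : ∀ _ : ℕ, ℝ) j = if j < n then f j else 0 := by
  rw [auxProj_apply]
  rw [lp.coeFn_sum]
  simp only [Finset.sum_apply, lp.single_apply]
  simp [Finset.sum_dite_eq, Finset.mem_range]

lemma aux_isCompactOperator_of_findim {X Y : Type*} [NormedAddCommGroup X] [NormedSpace ℝ X]
    [NormedAddCommGroup Y] [NormedSpace ℝ Y] [FiniteDimensional ℝ X] (f : X →L[ℝ] Y) :
    IsCompactOperator f :=
  ⟨f '' Metric.closedBall 0 1, ((isCompact_closedBall (0:X) 1).image f.continuous),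
    Filter.mem_of_superset (Metric.closedBall_mem_nhds 0 one_pos)
      (Set.subset_preimage_image f _)⟩

lemma auxProj_isCompactOperator (hp : 0 < p.toReal) (n : ℕ) :
    IsCompactOperator (auxProj p hp n) := by
  classical
  unfold auxProj
  induction (Finset.range n) using Finset.cons_induction with
  | empty => simpa using isCompactOperator_zero
  | cons a s ha ih =>
    rw [Finset.sum_cons]
    rw [ContinuousLinearMap.coe_add']
    have h1 : IsCompactOperator ((auxSingle p hp a).comp (auxEval p a)) := by
      have := (aux_isCompactOperator_of_findim (auxSingle p hp a)).comp_clm (auxEval p a)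
      rwa [ContinuousLinearMap.coe_comp']
    exact h1.add ih

end aux


lemma aux_exists_signs {H : Type*} [NormedAddCommGroup H] [InnerProductSpace ℝ H]
    (v : ℕ → H) (s : Finset ℕ) :
    ∃ σ : ℕ → ℝ, (∀ k, σ k = 1 ∨ σ k = -1) ∧
      ∑ k ∈ s, ‖v k‖ ^ 2 ≤ ‖∑ k ∈ s, σ k • v k‖ ^ 2 := by
  classical
  induction s using Finset.induction with
  | empty => exact ⟨fun _ => 1, fun _ => Or.inl rfl, by simp⟩
  | @insert a s ha ih =>
    obtain ⟨σ, hσ, hineq⟩ := ih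
    set w := ∑ k ∈ s, σ k • v k with hw
    have hpar : ‖v a + w‖ ^ 2 + ‖v a - w‖ ^ 2 = 2 * (‖v a‖ ^ 2 + ‖w‖ ^ 2) := by
      have := parallelogram_law_with_norm ℝ (v a) w
      nlinarith [this]
    rcases le_total (‖v a - w‖ ^ 2) (‖v a + w‖ ^ 2) with hc | hc
    · refine ⟨Function.update σ a 1, ?_, ?_⟩
      · intro k
        rcases eq_or_ne k a with rfl | hk
        · simp
        · simpa [Function.update_of_ne hk] using hσ k
      · rw [Finset.sum_insert ha, Finset.sum_insert ha]
        have h1 : Function.update σ a 1 a = 1 := by simp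
        have h2 : ∑ k ∈ s, Function.update σ a 1 k • v k = w := by
          refine Finset.sum_congr rfl fun k hk => ?_
          have : k ≠ a := fun h => ha (h ▸ hk)
          rw [Function.update_of_ne this]
        rw [h1, h2, one_smul]
        nlinarith [hpar, hc, hineq, sq_nonneg (‖v a - w‖)]
    · refine ⟨Function.update σ a (-1), ?_, ?_⟩
      · intro k
        rcases eq_or_ne k a with rfl | hk
        · simp
        · simpa [Function.update_of_ne hk] using hσ k
      · rw [Finset.sum_insert ha, Finset.sum_insert ha]
        have h1 : Function.update σ a (-1) a = (-1 : ℝ) := by simp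
        have h2 : ∑ k ∈ s, Function.update σ a (-1) k • v k = w := by
          refine Finset.sum_congr rfl fun k hk => ?_
          have : k ≠ a := fun h => ha (h ▸ hk)
          rw [Function.update_of_ne this]
        rw [h1, h2, neg_one_smul]
        have : ‖-v a + w‖ = ‖v a - w‖ := by rw [← norm_neg]; congr 1; abel
        rw [this]
        nlinarith [hpar, hc, hineq, sq_nonneg (‖v a + w‖)]


set_option maxHeartbeats 1000000 in
/-- Every bounded linear operator from `ℓ_p`, `2 < p < ∞`, to `ℓ_2` is compact. -/
theorem stmt_12 (p : ℝ≥0∞) [Fact (1 ≤ p)] (hp2 : 2 < p) (hp : p ≠ ⊤)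
    (T : lp (fun _ : ℕ => ℝ) p →L[ℝ] lp (fun _ : ℕ => ℝ) 2) :
    IsCompactOperator T := by
  classical
  have hp1 : (1:ℝ≥0∞) ≤ p := Fact.out
  have hp0 : p ≠ 0 := fun h => by simp [h] at hp1
  have hpr : 0 < p.toReal := ENNReal.toReal_pos hp0 hp
  have hpr2 : 2 < p.toReal := by
    have h2 : ((2:ℝ≥0∞)).toReal = 2 := by simp
    have := ENNReal.toReal_lt_toReal (by norm_num) hp |>.2 hp2
    rwa [h2] at this
  set pr := p.toReal with hprdef
  set X := lp (fun _ : ℕ => ℝ) p with hX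
  set Y := lp (fun _ : ℕ => ℝ) 2 with hY
  set P : ℕ → (X →L[ℝ] X) := auxProj p hpr with hP
  set D : ℕ → (X →L[ℝ] Y) := fun n => T - T.comp (P n) with hD
  -- basic facts about norms
  have hnorm_le : ∀ (f g : X), ‖f‖ ^ pr ≤ ‖g‖ ^ pr → ‖f‖ ≤ ‖g‖ := by
    intro f g h
    by_contra hc
    push_neg at hc
    exact absurd h (not_le.2 (Real.rpow_lt_rpow (norm_nonneg g) hc hpr))
  have hPnorm : ∀ n (f : X), ‖P n f‖ ≤ ‖f‖ := by
    intro n f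
    refine hnorm_le _ _ ?_
    have h1 : ‖P n f‖ ^ pr = ∑ i ∈ Finset.range n, ‖(f : ∀ _ : ℕ, ℝ) i‖ ^ pr := by
      rw [hP, auxProj_apply hpr]
      exact lp.norm_sum_single hpr _ _
    rw [h1]
    exact lp.sum_rpow_le_norm_rpow hpr f _
  have hQnorm : ∀ n (f : X), ‖f - P n f‖ ≤ ‖f‖ := by
    intro n f
    refine hnorm_le _ _ ?_
    have h1 : ‖f - P n f‖ ^ pr = ‖f‖ ^ pr - ∑ i ∈ Finset.range n, ‖(f : ∀ _ : ℕ, ℝ) i‖ ^ pr := by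
      rw [hP, auxProj_apply hpr]
      exact lp.norm_compl_sum_single hpr f _
    rw [h1]
    have : (0:ℝ) ≤ ∑ i ∈ Finset.range n, ‖(f : ∀ _ : ℕ, ℝ) i‖ ^ pr :=
      Finset.sum_nonneg fun i _ => Real.rpow_nonneg (norm_nonneg _) _
    linarith
  have hPzero : ∀ n (f : X), (∀ j, j < n → (f : ∀ _ : ℕ, ℝ) j = 0) → P n f = 0 := by
    intro n f hf
    refine lp.ext (funext fun j => ?_)
    rw [hP]
    rw [auxProj_coe hpr]
    by_cases hj : j < n
    · simp [hj, hf j hj]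
    · simp [hj]
  have hQcoord : ∀ n (f : X) (j : ℕ), j < n → ((f - P n f : X) : ∀ _ : ℕ, ℝ) j = 0 := by
    intro n f j hj
    rw [lp.coeFn_sub, Pi.sub_apply, hP, auxProj_coe hpr, if_pos hj, sub_self]
  -- antitonicity of n ↦ ‖D n‖
  have hDnorm_anti : ∀ ⦃n m : ℕ⦄, n ≤ m → ‖D m‖ ≤ ‖D n‖ := by
    intro n m hnm
    refine ContinuousLinearMap.opNorm_le_bound _ (norm_nonneg _) fun x => ?_
    have h1 : P n (x - P m x) = 0 :=
      hPzero n _ (fun j hj => hQcoord m x j (lt_of_lt_of_le hj hnm))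
    have key : D m x = D n (x - P m x) := by
      have h2 : D n (x - P m x) = T (x - P m x) - T (P n (x - P m x)) := by
        simp [hD, ContinuousLinearMap.sub_apply, ContinuousLinearMap.comp_apply]
      rw [h2, h1, map_zero, sub_zero, map_sub]
      simp [hD, ContinuousLinearMap.sub_apply, ContinuousLinearMap.comp_apply]
    rw [key]
    calc ‖D n (x - P m x)‖ ≤ ‖D n‖ * ‖x - P m x‖ := (D n).le_opNorm _
      _ ≤ ‖D n‖ * ‖x‖ := mul_le_mul_of_nonneg_left (hQnorm m x) (norm_nonneg _)
  -- infimum of the operator norms of the "tail" operators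
  have hbdd : BddBelow (Set.range fun n => ‖D n‖) :=
    ⟨0, by rintro r ⟨n, rfl⟩; exact norm_nonneg _⟩
  set δ : ℝ := ⨅ n, ‖D n‖ with hδdef
  have hδ0 : 0 ≤ δ := le_ciInf fun n => norm_nonneg _
  have hδle : ∀ n, δ ≤ ‖D n‖ := fun n => ciInf_le hbdd n
  have hTnn : (0:ℝ) ≤ ‖T‖ := norm_nonneg _
  have hδ : δ = 0 := by
    by_contra hne
    have hδpos : 0 < δ := lt_of_le_of_ne hδ0 (Ne.symm hne)
    -- construct disjoint blocks
    have key : ∀ n : ℕ, ∃ m, n < m ∧ ∃ y : X, ‖y‖ ≤ 1 ∧ δ/2 ≤ ‖T y‖ ∧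
        (∀ j, j < n → (y : ∀ _ : ℕ, ℝ) j = 0) ∧ (∀ j, m ≤ j → (y : ∀ _ : ℕ, ℝ) j = 0) := by
      intro n
      have h34 : 3*δ/4 < ‖D n‖ := lt_of_lt_of_le (by linarith) (hδle n)
      obtain ⟨x, hx1, hx2⟩ := (D n).exists_lt_apply_of_lt_opNorm h34
      set z : X := x - P n x with hz
      have hz1 : ‖z‖ ≤ 1 := le_trans (hQnorm n x) hx1.le
      have hzc : ∀ j, j < n → (z : ∀ _ : ℕ, ℝ) j = 0 := fun j hj => hQcoord n x j hj
      have hTz : T z = D n x := by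
        simp [hz, hD, map_sub, ContinuousLinearMap.sub_apply, ContinuousLinearMap.comp_apply]
      have hTz2 : 3*δ/4 < ‖T z‖ := by rw [hTz]; exact hx2
      have hsum : Filter.Tendsto (fun m => P m z) atTop (𝓝 z) := by
        have h := (lp.hasSum_single (E := fun _ : ℕ => ℝ) hp z).tendsto_sum_nat
        have he : (fun m => P m z) = fun m => ∑ i ∈ Finset.range m, lp.single p i ((z : ∀ _ : ℕ, ℝ) i) := by
          funext m; exact auxProj_apply hpr m z
        rw [he]; exact h
      rw [Metric.tendsto_atTop] at hsum
      obtain ⟨M, hM⟩ := hsum (δ/(4*(‖T‖+1))) (by positivity)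
      set m := max M (n+1) with hmdef
      have hnm : n < m := lt_of_lt_of_le (Nat.lt_succ_self n) (le_max_right _ _)
      refine ⟨m, hnm, P m z, le_trans (hPnorm m z) hz1, ?_, ?_, ?_⟩
      · have hdist : ‖P m z - z‖ < δ/(4*(‖T‖+1)) := by
          simpa [dist_eq_norm] using hM m (le_max_left _ _)
        have h5 : ‖T (P m z) - T z‖ ≤ ‖T‖ * ‖P m z - z‖ := by
          rw [← map_sub]; exact T.le_opNorm _
        have h7 : ‖T‖ * (δ/(4*(‖T‖+1))) ≤ δ/4 := by
          rw [mul_div_assoc']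
          rw [div_le_div_iff₀ (by positivity) (by norm_num)]
          nlinarith [hTnn, hδpos]
        have h6 : ‖T (P m z) - T z‖ ≤ δ/4 := by
          refine le_trans h5 (le_trans ?_ h7)
          exact mul_le_mul_of_nonneg_left hdist.le hTnn
        have h8 : ‖T z‖ - ‖T (P m z)‖ ≤ ‖T z - T (P m z)‖ := norm_sub_norm_le _ _
        rw [norm_sub_rev] at h6
        linarith
      · intro j hj
        rw [hP, auxProj_coe hpr]
        have : j < m := lt_of_lt_of_le hj hnm.le
        rw [if_pos this]
        exact hzc j hj
      · intro j hj
        rw [hP, auxProj_coe hpr, if_neg (not_lt.2 hj)]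
    choose m hm y hy1 hy2 hy3 hy4 using key
    set nseq : ℕ → ℕ := fun k => Nat.rec 0 (fun _ ih => m ih) k with hnseqdef
    have hnseq : ∀ k, nseq (k+1) = m (nseq k) := fun k => rfl
    have hmono : StrictMono nseq :=
      strictMono_nat_of_lt_succ (fun k => by rw [hnseq]; exact hm _)
    set u : ℕ → X := fun k => y (nseq k) with hu
    have hu1 : ∀ k, ‖u k‖ ≤ 1 := fun k => hy1 _
    have hu2 : ∀ k, δ/2 ≤ ‖T (u k)‖ := fun k => hy2 _
    have husupp1 : ∀ k j, j < nseq k → (u k : ∀ _ : ℕ, ℝ) j = 0 := fun k j hj => hy3 _ j hj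
    have husupp2 : ∀ k j, nseq (k+1) ≤ j → (u k : ∀ _ : ℕ, ℝ) j = 0 := fun k j hj =>
      hy4 _ j (by rwa [hnseq] at hj)
    have hdisj : ∀ k l j, k < l → (u k : ∀ _ : ℕ, ℝ) j ≠ 0 → (u l : ∀ _ : ℕ, ℝ) j = 0 := by
      intro k l j hkl hne
      have hjlt : j < nseq (k+1) := by
        by_contra hge
        exact hne (husupp2 k j (not_lt.1 hge))
      exact husupp1 l j (lt_of_lt_of_le hjlt (hmono.monotone (Nat.succ_le_of_lt hkl)))
    clear_value u nseq
    -- the key quantitative estimate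
    have main : ∀ N : ℕ, (δ/2)^2 * N ≤ ‖T‖^2 * ((N:ℝ) ^ (2/pr)) := by
      intro N
      obtain ⟨σ, hσ, hs⟩ := aux_exists_signs (fun k => T (u k)) (Finset.range N)
      set xN : X := ∑ k ∈ Finset.range N, σ k • u k with hxN
      have hTxN : T xN = ∑ k ∈ Finset.range N, σ k • T (u k) := by
        rw [hxN, map_sum]
        exact Finset.sum_congr rfl fun k _ => by rw [map_smul]
      have hpt : ∀ j : ℕ, ‖(xN : ∀ _ : ℕ, ℝ) j‖ ^ pr ≤
          ∑ k ∈ Finset.range N, ‖(u k : ∀ _ : ℕ, ℝ) j‖ ^ pr := by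
        intro j
        have hcoe : (xN : ∀ _ : ℕ, ℝ) j = ∑ k ∈ Finset.range N, σ k * (u k : ∀ _ : ℕ, ℝ) j := by
          rw [hxN, lp.coeFn_sum, Finset.sum_apply]
          exact Finset.sum_congr rfl fun k _ => by rw [lp.coeFn_smul]; rfl
        by_cases hex : ∃ k ∈ Finset.range N, (u k : ∀ _ : ℕ, ℝ) j ≠ 0
        · obtain ⟨k₀, hk₀, hk₀ne⟩ := hex
          have hsum1 : (xN : ∀ _ : ℕ, ℝ) j = σ k₀ * (u k₀ : ∀ _ : ℕ, ℝ) j := by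
            rw [hcoe]
            refine Finset.sum_eq_single_of_mem k₀ hk₀ fun b hb hbne => ?_
            rcases lt_or_gt_of_ne hbne with h | h
            · by_contra hbne0
              have hb0 : (u b : ∀ _ : ℕ, ℝ) j ≠ 0 := fun h0 => hbne0 (by rw [h0, mul_zero])
              exact hk₀ne (hdisj b k₀ j h hb0)
            · rw [hdisj k₀ b j h hk₀ne, mul_zero]
          have habs : ‖(xN : ∀ _ : ℕ, ℝ) j‖ = ‖(u k₀ : ∀ _ : ℕ, ℝ) j‖ := by
            rw [hsum1, norm_mul]
            rcases hσ k₀ with h | h <;> rw [h] <;> simp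
          rw [habs]
          exact Finset.single_le_sum (f := fun k => ‖(u k : ∀ _ : ℕ, ℝ) j‖ ^ pr)
            (fun k _ => Real.rpow_nonneg (norm_nonneg _) _) hk₀
        · push_neg at hex
          have h0 : (xN : ∀ _ : ℕ, ℝ) j = 0 := by
            rw [hcoe]
            exact Finset.sum_eq_zero fun k hk => by rw [hex k hk, mul_zero]
          rw [h0, norm_zero, Real.zero_rpow hpr.ne']
          exact Finset.sum_nonneg fun k _ => Real.rpow_nonneg (norm_nonneg _) _
      have hxNnorm : ‖xN‖ ≤ (N:ℝ) ^ (1/pr) := by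
        refine lp.norm_le_of_forall_sum_le hpr (Real.rpow_nonneg (Nat.cast_nonneg N) _) fun s => ?_
        have hC : ((N:ℝ) ^ (1/pr)) ^ pr = (N:ℝ) := by
          rw [← Real.rpow_mul (Nat.cast_nonneg N), one_div_mul_cancel hpr.ne', Real.rpow_one]
        rw [hC]
        calc ∑ j ∈ s, ‖(xN : ∀ _ : ℕ, ℝ) j‖ ^ pr
            ≤ ∑ j ∈ s, ∑ k ∈ Finset.range N, ‖(u k : ∀ _ : ℕ, ℝ) j‖ ^ pr :=
              Finset.sum_le_sum fun j _ => hpt j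
          _ = ∑ k ∈ Finset.range N, ∑ j ∈ s, ‖(u k : ∀ _ : ℕ, ℝ) j‖ ^ pr := Finset.sum_comm
          _ ≤ ∑ k ∈ Finset.range N, ‖u k‖ ^ pr :=
              Finset.sum_le_sum fun k _ => lp.sum_rpow_le_norm_rpow hpr (u k) s
          _ ≤ ∑ k ∈ Finset.range N, 1 :=
              Finset.sum_le_sum fun k _ => Real.rpow_le_one (norm_nonneg _) (hu1 k) hpr.le
          _ = N := by simp
      have hlower : (δ/2)^2 * N ≤ ‖T xN‖^2 := by
        have h1 : (δ/2)^2 * N ≤ ∑ k ∈ Finset.range N, ‖T (u k)‖^2 := by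
          calc (δ/2)^2 * N = ∑ _k ∈ Finset.range N, (δ/2)^2 := by
                rw [Finset.sum_const, Finset.card_range, nsmul_eq_mul, mul_comm]
            _ ≤ ∑ k ∈ Finset.range N, ‖T (u k)‖^2 := Finset.sum_le_sum fun k _ => by
                have h := hu2 k
                nlinarith [norm_nonneg (T (u k)), hδpos]
        refine le_trans h1 (le_trans hs ?_)
        rw [hTxN]
      have hupper : ‖T xN‖^2 ≤ ‖T‖^2 * ((N:ℝ) ^ (2/pr)) := by
        have h1 : ‖T xN‖ ≤ ‖T‖ * ((N:ℝ)^(1/pr)) :=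
          le_trans (T.le_opNorm xN) (mul_le_mul_of_nonneg_left hxNnorm hTnn)
        have h2 : ‖T xN‖^2 ≤ (‖T‖ * ((N:ℝ)^(1/pr)))^2 :=
          pow_le_pow_left₀ (norm_nonneg _) h1 2
        rw [mul_pow] at h2
        have h3 : ((N:ℝ)^(1/pr))^(2:ℕ) = (N:ℝ)^(2/pr) := by
          rw [← Real.rpow_natCast ((N:ℝ)^(1/pr)) 2, ← Real.rpow_mul (Nat.cast_nonneg N)]
          congr 1
          push_cast
          ring
        rwa [h3] at h2
      linarith
    -- contradiction for large N
    have ha : 0 < 1 - 2/pr := by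
      have h1 : 2/pr < 1 := (div_lt_one (by linarith)).2 (by linarith)
      linarith
    have htend : Filter.Tendsto (fun N : ℕ => ((N:ℝ)) ^ (1 - 2/pr)) atTop atTop :=
      (tendsto_rpow_atTop ha).comp tendsto_natCast_atTop_atTop
    obtain ⟨N, hNa, hN1'⟩ :=
      ((htend.eventually_ge_atTop (‖T‖^2/(δ/2)^2 + 1)).and (Filter.eventually_ge_atTop 1)).exists
    have hN1 : (1:ℝ) ≤ (N:ℝ) := by exact_mod_cast hN1'
    have hNpos : (0:ℝ) < N := by linarith
    have hsplit : (N:ℝ) = (N:ℝ)^(2/pr) * (N:ℝ)^(1-2/pr) := by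
      rw [← Real.rpow_add hNpos]
      norm_num
    have hmain := main N
    nth_rewrite 1 [hsplit] at hmain
    have hNq : 0 < (N:ℝ)^(2/pr) := Real.rpow_pos_of_pos hNpos _
    have h4 : (δ/2)^2 * (N:ℝ)^(1-2/pr) ≤ ‖T‖^2 := by
      have h5 : ((δ/2)^2 * (N:ℝ)^(1-2/pr)) * (N:ℝ)^(2/pr) ≤ ‖T‖^2 * (N:ℝ)^(2/pr) := by
        calc ((δ/2)^2 * (N:ℝ)^(1-2/pr)) * (N:ℝ)^(2/pr)
            = (δ/2)^2 * ((N:ℝ)^(2/pr) * (N:ℝ)^(1-2/pr)) := by ring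
          _ ≤ ‖T‖^2 * (N:ℝ)^(2/pr) := hmain
      exact le_of_mul_le_mul_right h5 hNq
    have hδ2 : 0 < (δ/2)^2 := by positivity
    have h6 : (N:ℝ)^(1-2/pr) ≤ ‖T‖^2/(δ/2)^2 := by
      rw [le_div_iff₀ hδ2]
      linarith
    linarith
  -- conclude compactness
  have htendD : Filter.Tendsto (fun n => ‖D n‖) atTop (𝓝 δ) :=
    tendsto_atTop_ciInf hDnorm_anti hbdd
  rw [hδ] at htendD
  have hT : Filter.Tendsto (fun n => T.comp (P n)) atTop (𝓝 T) := by
    rw [tendsto_iff_norm_sub_tendsto_zero]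
    have he : (fun n => ‖T.comp (P n) - T‖) = fun n => ‖D n‖ := by
      funext n
      rw [hD, norm_sub_rev]
    rw [he]
    exact htendD
  refine isCompactOperator_of_tendsto hT (Filter.Eventually.of_forall fun n => ?_)
  have hc := (auxProj_isCompactOperator (p := p) hpr n).clm_comp T
  rwa [← ContinuousLinearMap.coe_comp'] at hc
end

section
/- Every bounded linear operator from c_0 to ℓ_2 is compact. -/
open scoped ENNReal NNReal ZeroAtInfty RealInnerProductSpace
open Filter Topology

set_option maxHeartbeats 2000000

noncomputable section Stmt13Section

namespace Stmt13Aux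

/-- Window truncation of a sequence: keep coordinates in `[a, b)`; always in `c₀`. -/
def wtrunc (f : ℕ → ℝ) (a b : ℕ) : C₀(ℕ, ℝ) where
  toFun n := if a ≤ n ∧ n < b then f n else 0
  continuous_toFun := continuous_of_discreteTopology
  zero_at_infty' := by
    rw [cocompact_eq_atTop]
    apply tendsto_nhds_of_eventually_eq
    filter_upwards [eventually_ge_atTop b] with n hn
    have : ¬ (a ≤ n ∧ n < b) := fun h => absurd h.2 (Nat.not_lt.mpr hn)
    simp [this]

@[simp] lemma wtrunc_apply (f : ℕ → ℝ) (a b n : ℕ) :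
    wtrunc f a b n = if a ≤ n ∧ n < b then f n else 0 := rfl

lemma c0_norm_apply_le (f : C₀(ℕ, ℝ)) (n : ℕ) : ‖f n‖ ≤ ‖f‖ := by
  rw [← ZeroAtInftyContinuousMap.norm_toBCF_eq_norm]
  exact BoundedContinuousFunction.norm_coe_le_norm f.toBCF n

lemma c0_norm_le (f : C₀(ℕ, ℝ)) {C : ℝ} (hC : 0 ≤ C) (h : ∀ n, ‖f n‖ ≤ C) : ‖f‖ ≤ C := by
  rw [← ZeroAtInftyContinuousMap.norm_toBCF_eq_norm]
  exact BoundedContinuousFunction.norm_le hC |>.2 h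

/-- Evaluation at `n` as an additive monoid hom. -/
def evalAMH (n : ℕ) : C₀(ℕ, ℝ) →+ ℝ :=
  AddMonoidHom.mk' (fun f => f n) (fun f g => rfl)

def coordCLM (i : ℕ) : lp (fun _ : ℕ => ℝ) 2 →L[ℝ] ℝ :=
  LinearMap.mkContinuous
    { toFun := fun y => y i
      map_add' := fun x y => rfl
      map_smul' := fun c x => rfl } 1
    (fun y => by show ‖y i‖ ≤ 1 * ‖y‖; simpa using lp.norm_apply_le_norm (by norm_num) y i)

@[simp] lemma coordCLM_apply (i : ℕ) (y : lp (fun _ : ℕ => ℝ) 2) : coordCLM i y = y i := rfl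

def singleL (i : ℕ) : ℝ →ₗ[ℝ] lp (fun _ : ℕ => ℝ) 2 where
  toFun a := lp.single 2 i a
  map_add' a b := by
    refine lp.ext (funext fun j => ?_)
    by_cases h : j = i
    · subst h; simp [lp.single_apply_self]
    · simp [lp.single_apply_ne _ _ _ h]
  map_smul' c a := by simpa using lp.single_smul (E := fun _ : ℕ => ℝ) 2 i c a

lemma norm_singleL (i : ℕ) (a : ℝ) : ‖singleL i a‖ = ‖a‖ := by
  have := lp.norm_single (E := fun _ : ℕ => ℝ) (p := 2) (by norm_num) i a
  simpa [singleL] using this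

def singleCLM (i : ℕ) : ℝ →L[ℝ] lp (fun _ : ℕ => ℝ) 2 :=
  LinearMap.mkContinuous (singleL i) 1 (fun a => by simp [norm_singleL])

@[simp] lemma singleCLM_apply (i : ℕ) (a : ℝ) : singleCLM i a = lp.single 2 i a := rfl

def headCLM (N : ℕ) : lp (fun _ : ℕ => ℝ) 2 →L[ℝ] lp (fun _ : ℕ => ℝ) 2 :=
  ∑ i ∈ Finset.range N, (singleCLM i).comp (coordCLM i)

lemma headCLM_apply (N : ℕ) (y : lp (fun _ : ℕ => ℝ) 2) :
    headCLM N y = ∑ i ∈ Finset.range N, lp.single 2 i (y i) := by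
  simp [headCLM, ContinuousLinearMap.sum_apply]

lemma tail_norm_sq (N : ℕ) (y : lp (fun _ : ℕ => ℝ) 2) :
    ‖y - headCLM N y‖ ^ 2 = ‖y‖ ^ 2 - ∑ i ∈ Finset.range N, ‖y i‖ ^ 2 := by
  have h2 : (0:ℝ) < (2 : ℝ≥0∞).toReal := by norm_num
  have := lp.norm_compl_sum_single (E := fun _ : ℕ => ℝ) h2 y (Finset.range N)
  rw [headCLM_apply]
  have htR : (2 : ℝ≥0∞).toReal = (2:ℕ) := by norm_num
  simp only [htR, Real.rpow_natCast] at this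
  exact_mod_cast this

lemma tail_norm_le (N : ℕ) (y : lp (fun _ : ℕ => ℝ) 2) :
    ‖y - headCLM N y‖ ≤ ‖y‖ := by
  have h := tail_norm_sq N y
  nlinarith [norm_nonneg (y - headCLM N y), norm_nonneg y,
    Finset.sum_nonneg (fun i (_ : i ∈ Finset.range N) => sq_nonneg ‖y i‖)]

lemma tail_norm_anti (y : lp (fun _ : ℕ => ℝ) 2) :
    Antitone fun N => ‖y - headCLM N y‖ := by
  apply antitone_nat_of_succ_le
  intro N
  have h1 := tail_norm_sq N y
  have h2 := tail_norm_sq (N + 1) y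
  have : ∑ i ∈ Finset.range N, ‖y i‖ ^ 2 ≤ ∑ i ∈ Finset.range (N+1), ‖y i‖ ^ 2 :=
    Finset.sum_le_sum_of_subset_of_nonneg (Finset.range_subset_range.mpr (Nat.le_succ N))
      (fun i _ _ => sq_nonneg _)
  nlinarith [norm_nonneg (y - headCLM (N+1) y), norm_nonneg (y - headCLM N y)]

lemma tail_tendsto (y : lp (fun _ : ℕ => ℝ) 2) :
    Tendsto (fun N => ‖y - headCLM N y‖) atTop (𝓝 0) := by
  have hs : HasSum (fun i : ℕ => lp.single 2 i (y i)) y :=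
    lp.hasSum_single (by norm_num) y
  have h1 := hs.tendsto_sum_nat
  have h2 : Tendsto (fun N => headCLM N y) atTop (𝓝 y) := by
    have e : (fun N => headCLM N y) = fun n => ∑ i ∈ Finset.range n, lp.single 2 i (y i) :=
      funext fun N => headCLM_apply N y
    rw [e]; exact h1
  have h3 : Tendsto (fun N => y - headCLM N y) atTop (𝓝 (y - y)) :=
    tendsto_const_nhds.sub h2
  rw [sub_self] at h3
  exact tendsto_zero_iff_norm_tendsto_zero.mp h3

lemma isCompactOperator_to_real {X : Type*} [NormedAddCommGroup X] [NormedSpace ℝ X]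
    (f : X →L[ℝ] ℝ) : IsCompactOperator f := by
  refine ⟨Metric.closedBall 0 ‖f‖, isCompact_closedBall _ _, ?_⟩
  refine Filter.mem_of_superset (Metric.closedBall_mem_nhds (0 : X) one_pos) ?_
  intro x hx
  simp only [Set.mem_preimage, Metric.mem_closedBall, dist_zero_right] at *
  calc ‖f x‖ ≤ ‖f‖ * ‖x‖ := f.le_opNorm x
    _ ≤ ‖f‖ * 1 := by
        exact mul_le_mul_of_nonneg_left hx (norm_nonneg f)
    _ = ‖f‖ := mul_one _

lemma isCompactOperator_head_comp (T : C₀(ℕ, ℝ) →L[ℝ] lp (fun _ : ℕ => ℝ) 2) (N : ℕ) :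
    IsCompactOperator ((headCLM N).comp T) := by
  have : (headCLM N).comp T
      = ∑ i ∈ Finset.range N, (singleCLM i).comp ((coordCLM i).comp T) := by
    rw [headCLM, ContinuousLinearMap.finset_sum_comp]
    simp [ContinuousLinearMap.comp_assoc]
  rw [this]
  have key : ∀ i : ℕ, IsCompactOperator ((singleCLM i).comp ((coordCLM i).comp T)) := by
    intro i
    have h1 : IsCompactOperator ((coordCLM i).comp T) := isCompactOperator_to_real _
    have := h1.continuous_comp (singleCLM i).continuous
    exact this
  refine Finset.sum_induction _ (fun f : C₀(ℕ, ℝ) →L[ℝ] lp (fun _ : ℕ => ℝ) 2 =>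
    IsCompactOperator f) ?_ ?_ ?_
  · intro a b ha hb
    have := ha.add hb
    simpa using this
  · simpa using isCompactOperator_zero
  · intro i _; exact key i


def e (j : ℕ) : C₀(ℕ, ℝ) := wtrunc (fun _ => 1) j (j+1)

lemma e_apply (j n : ℕ) : e j n = if n = j then 1 else 0 := by
  simp only [e, wtrunc_apply]
  by_cases h : n = j
  · subst h; simp
  · have : ¬ (j ≤ n ∧ n < j + 1) := by omega
    rw [if_neg this, if_neg h]

lemma head_eq_sum (x : C₀(ℕ, ℝ)) (m : ℕ) :
    wtrunc (⇑x) 0 m = ∑ j ∈ Finset.range m, x j • e j := by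
  ext n
  have hs : (∑ j ∈ Finset.range m, x j • e j) n
      = ∑ j ∈ Finset.range m, x j * e j n := by
    induction m with
    | zero => simp
    | succ k ih => rw [Finset.sum_range_succ, Finset.sum_range_succ, ← ih]; simp
  rw [hs]
  have : ∀ j, x j * e j n = if n = j then x j else 0 := by
    intro j; rw [e_apply]; split_ifs with h <;> simp [h]
  simp only [this, Finset.sum_ite_eq, Finset.mem_range, wtrunc_apply, Nat.zero_le, true_and]

lemma step (T : C₀(ℕ, ℝ) →L[ℝ] lp (fun _ : ℕ => ℝ) 2) {ε : ℝ} (hε : 0 < ε)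
    (h : ∀ N : ℕ, ∃ x : C₀(ℕ, ℝ), ‖x‖ ≤ 1 ∧ ε < ‖T x - headCLM N (T x)‖) (m : ℕ) :
    ∃ (u : C₀(ℕ, ℝ)) (M : ℕ), (∀ n, M ≤ n → u n = 0) ∧ (∀ n, n < m → u n = 0) ∧
      ‖u‖ ≤ 1 ∧ ε / 2 ≤ ‖T u‖ := by
  have hT1 : (0:ℝ) < ‖T‖ + 1 := by positivity
  set δ := ε / (4 * (‖T‖ + 1)) with hδdef
  have hδ : 0 < δ := by positivity
  -- choose N killing tails of images of the first m basis vectors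
  have hsum : Tendsto (fun N => ∑ j ∈ Finset.range m, ‖T (e j) - headCLM N (T (e j))‖)
      atTop (𝓝 0) := by
    have := tendsto_finset_sum (Finset.range m) (fun j _ => tail_tendsto (T (e j)))
    simpa using this
  obtain ⟨N, hN⟩ := (hsum.eventually (gt_mem_nhds (show (0:ℝ) < ε/8 by positivity))).exists
  obtain ⟨x, hx1, hx2⟩ := h N
  -- choose M
  have hx0 : Tendsto (⇑x) atTop (𝓝 0) := by
    have := zero_at_infty x; rwa [cocompact_eq_atTop] at this
  have hev : ∀ᶠ n in atTop, ‖x n‖ < δ := by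
    have := hx0.eventually (Metric.ball_mem_nhds (0:ℝ) hδ)
    simpa [Real.dist_eq] using this
  obtain ⟨M₀, hM₀⟩ := eventually_atTop.mp hev
  set M := max m M₀ with hMdef
  have hmM : m ≤ M := le_max_left _ _
  set A := T - (headCLM N).comp T with hA
  have hAap : ∀ z, A z = T z - headCLM N (T z) := fun z => by
    simp [hA, ContinuousLinearMap.sub_apply]
  have hAle : ∀ z : C₀(ℕ, ℝ), ‖A z‖ ≤ ‖T z‖ := fun z => by
    rw [hAap]; exact tail_norm_le N (T z)
  -- b1
  have hxM : ‖x - wtrunc (⇑x) 0 M‖ ≤ δ := by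
    refine c0_norm_le _ hδ.le fun n => ?_
    have hcoe : (x - wtrunc (⇑x) 0 M) n = x n - wtrunc (⇑x) 0 M n := by simp
    rw [hcoe, wtrunc_apply]
    by_cases hn : n < M
    · simpa [hn] using hδ.le
    · have : M₀ ≤ n := le_trans (le_max_right _ _) (Nat.le_of_not_lt hn)
      simp only [hn, and_false, if_false, sub_zero]
      exact (hM₀ n this).le
  have b1 : ‖A (x - wtrunc (⇑x) 0 M)‖ ≤ ε / 4 := by
    have h1 : ‖A (x - wtrunc (⇑x) 0 M)‖ ≤ ‖T (x - wtrunc (⇑x) 0 M)‖ := hAle _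
    have h2 : ‖T (x - wtrunc (⇑x) 0 M)‖ ≤ ‖T‖ * δ := by
      calc ‖T (x - wtrunc (⇑x) 0 M)‖ ≤ ‖T‖ * ‖x - wtrunc (⇑x) 0 M‖ := T.le_opNorm _
        _ ≤ ‖T‖ * δ := mul_le_mul_of_nonneg_left hxM (norm_nonneg T)
    have h3 : ‖T‖ * δ ≤ ε / 4 := by
      have hle : ‖T‖ * δ ≤ (‖T‖ + 1) * δ := by nlinarith [norm_nonneg T]
      have heq : (‖T‖ + 1) * δ = ε / 4 := by
        rw [hδdef]; field_simp
      linarith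
    linarith
  -- b2
  have b2 : ‖A (wtrunc (⇑x) 0 m)‖ ≤ ε / 8 := by
    rw [head_eq_sum, map_sum]
    calc ‖∑ j ∈ Finset.range m, A (x j • e j)‖
        ≤ ∑ j ∈ Finset.range m, ‖A (x j • e j)‖ := norm_sum_le _ _
      _ ≤ ∑ j ∈ Finset.range m, ‖T (e j) - headCLM N (T (e j))‖ := by
          refine Finset.sum_le_sum fun j _ => ?_
          rw [map_smul, norm_smul]
          have : ‖x j‖ ≤ 1 := le_trans (c0_norm_apply_le x j) hx1
          calc ‖x j‖ * ‖A (e j)‖ ≤ 1 * ‖A (e j)‖ :=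
                mul_le_mul_of_nonneg_right this (norm_nonneg _)
            _ = ‖A (e j)‖ := one_mul _
            _ = ‖T (e j) - headCLM N (T (e j))‖ := by rw [hAap]
      _ ≤ ε / 8 := hN.le
  -- decomposition
  have hsplit : wtrunc (⇑x) 0 M = wtrunc (⇑x) 0 m + wtrunc (⇑x) m M := by
    ext n
    have hcoe : (wtrunc (⇑x) 0 m + wtrunc (⇑x) m M) n
        = wtrunc (⇑x) 0 m n + wtrunc (⇑x) m M n := by simp
    rw [hcoe]
    simp only [wtrunc_apply, Nat.zero_le, true_and]
    by_cases h1 : n < m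
    · have h2 : n < M := lt_of_lt_of_le h1 hmM
      have : ¬ (m ≤ n ∧ n < M) := by omega
      simp [h1, h2, this]
    · by_cases h2 : n < M
      · have : m ≤ n ∧ n < M := ⟨Nat.le_of_not_lt h1, h2⟩
        simp [h1, h2, this]
      · have : ¬ (m ≤ n ∧ n < M) := by omega
        simp [h1, h2, this]
  set u := wtrunc (⇑x) m M with hu
  have hdec : x = (x - wtrunc (⇑x) 0 M) + wtrunc (⇑x) 0 m + u := by
    rw [add_assoc, ← hsplit, sub_add_cancel]
  have hAx : A x = A (x - wtrunc (⇑x) 0 M) + A (wtrunc (⇑x) 0 m) + A u := by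
    conv_lhs => rw [hdec]
    rw [map_add, map_add]
  have hax : ε < ‖A x‖ := by rw [hAap]; exact hx2
  have hnorm : ‖A x‖ ≤ ‖A (x - wtrunc (⇑x) 0 M)‖ + ‖A (wtrunc (⇑x) 0 m)‖ + ‖A u‖ := by
    rw [hAx]; exact norm_add₃_le
  have hTu : ε / 2 ≤ ‖T u‖ := by
    have := hAle u
    linarith
  refine ⟨u, M, ?_, ?_, ?_, hTu⟩
  · intro n hn
    have : ¬ (m ≤ n ∧ n < M) := by omega
    simp [hu, this]
  · intro n hn
    have : ¬ (m ≤ n ∧ n < M) := by omega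
    simp [hu, this]
  · refine c0_norm_le _ zero_le_one fun n => ?_
    rw [hu]
    simp only [wtrunc_apply]
    split_ifs with hc
    · exact le_trans (c0_norm_apply_le x n) hx1
    · simp

lemma exists_unit (A : C₀(ℕ, ℝ) →L[ℝ] lp (fun _ : ℕ => ℝ) 2) {c : ℝ} (hc : 0 ≤ c)
    (h : c < ‖A‖) : ∃ x, ‖x‖ ≤ 1 ∧ c < ‖A x‖ := by
  by_contra hx
  push_neg at hx
  have hle : ‖A‖ ≤ c := by
    refine A.opNorm_le_bound hc fun x => ?_
    rcases eq_or_ne x 0 with rfl | hx0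
    · simp
    · have hn : 0 < ‖x‖ := norm_pos_iff.mpr hx0
      have h1 : ‖(‖x‖⁻¹ • x : C₀(ℕ, ℝ))‖ ≤ 1 := by
        have := norm_smul (‖x‖⁻¹) x
        rw [this, norm_inv, norm_norm, inv_mul_cancel₀ hn.ne']
      have h2 := hx _ h1
      rw [map_smul, norm_smul, norm_inv, norm_norm] at h2
      calc ‖A x‖ = ‖x‖ * (‖x‖⁻¹ * ‖A x‖) := by field_simp
        _ ≤ ‖x‖ * c := mul_le_mul_of_nonneg_left h2 hn.le
        _ = c * ‖x‖ := mul_comm _ _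
  linarith

lemma grow (T : C₀(ℕ, ℝ) →L[ℝ] lp (fun _ : ℕ => ℝ) 2) {ε : ℝ} (hε : 0 < ε)
    (h : ∀ N : ℕ, ∃ x : C₀(ℕ, ℝ), ‖x‖ ≤ 1 ∧ ε < ‖T x - headCLM N (T x)‖) (K : ℕ) :
    ∃ (w : C₀(ℕ, ℝ)) (m : ℕ), ‖w‖ ≤ 1 ∧ (K : ℝ) * (ε / 2) ^ 2 ≤ ‖T w‖ ^ 2 ∧
      (∀ n, m ≤ n → w n = 0) := by
  induction K with
  | zero => exact ⟨0, 0, by simp, by simp, fun n _ => rfl⟩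
  | succ K ih =>
    obtain ⟨w, m, hw1, hw2, hw3⟩ := ih
    obtain ⟨u, M, hu1, hu2, hu3, hu4⟩ := step T hε h m
    set s : ℝ := if 0 ≤ ⟪T w, T u⟫ then 1 else -1 with hs
    have hs1 : s * s = 1 := by
      by_cases hc : 0 ≤ ⟪T w, T u⟫ <;> simp [hs, hc]
    have habs : |s| = 1 := by
      by_cases hc : 0 ≤ ⟪T w, T u⟫ <;> simp [hs, hc]
    have hs2 : 0 ≤ s * ⟪T w, T u⟫ := by
      by_cases hc : 0 ≤ ⟪T w, T u⟫
      · rw [hs, if_pos hc, one_mul]; exact hc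
      · push_neg at hc
        simp only [hs, if_neg (not_le.mpr hc)]
        nlinarith
    refine ⟨w + s • u, max m M, ?_, ?_, ?_⟩
    · refine c0_norm_le _ zero_le_one fun n => ?_
      have hco : (w + s • u) n = w n + s * u n := by simp
      rw [hco]
      by_cases hn : n < m
      · rw [hu2 n hn, mul_zero, add_zero]
        exact le_trans (c0_norm_apply_le w n) hw1
      · rw [hw3 n (Nat.le_of_not_lt hn), zero_add]
        rw [Real.norm_eq_abs, abs_mul, habs, one_mul]
        exact le_trans (c0_norm_apply_le u n) hu3
    · have hexp : ‖T (w + s • u)‖ ^ 2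
          = ‖T w‖ ^ 2 + 2 * (s * ⟪T w, T u⟫) + ‖T u‖ ^ 2 := by
        rw [map_add, map_smul, norm_add_sq_real, real_inner_smul_right,
          norm_smul, Real.norm_eq_abs, habs, one_mul]
      have hTu2 : (ε / 2) ^ 2 ≤ ‖T u‖ ^ 2 := by nlinarith
      rw [hexp]
      push_cast
      nlinarith
    · intro n hn
      have h1 : w n = 0 := hw3 n (le_trans (le_max_left _ _) hn)
      have h2 : u n = 0 := hu1 n (le_trans (le_max_right _ _) hn)
      have hco : (w + s • u) n = w n + s * u n := by simp
      rw [hco, h1, h2, mul_zero, add_zero]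


end Stmt13Aux

open Stmt13Aux in
/-- Every bounded linear operator from `c₀` (real sequences vanishing at infinity, with
the supremum norm) to `ℓ_2` is compact. -/
theorem stmt_13 (T : C₀(ℕ, ℝ) →L[ℝ] lp (fun _ : ℕ => ℝ) 2) :
    IsCompactOperator T := by
  have key : ∀ ε : ℝ, 0 < ε → ∃ N, ‖T - (headCLM N).comp T‖ ≤ ε := by
    intro ε hε
    by_contra hcon
    push_neg at hcon
    have h : ∀ N : ℕ, ∃ x : C₀(ℕ, ℝ), ‖x‖ ≤ 1 ∧ ε / 2 < ‖T x - headCLM N (T x)‖ := by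
      intro N
      obtain ⟨x, hx1, hx2⟩ := exists_unit (T - (headCLM N).comp T)
        (by positivity) (lt_of_lt_of_le (half_lt_self hε) (hcon N).le)
      refine ⟨x, hx1, ?_⟩
      have hco : (T - (headCLM N).comp T) x = T x - headCLM N (T x) := by
        simp [ContinuousLinearMap.sub_apply]
      rwa [hco] at hx2
    obtain ⟨K, hK⟩ := exists_nat_gt (‖T‖ ^ 2 / (ε / 2 / 2) ^ 2)
    obtain ⟨w, m, hw1, hw2, _⟩ := grow T (half_pos hε) h K
    have hTw : ‖T w‖ ≤ ‖T‖ := by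
      calc ‖T w‖ ≤ ‖T‖ * ‖w‖ := T.le_opNorm w
        _ ≤ ‖T‖ * 1 := mul_le_mul_of_nonneg_left hw1 (norm_nonneg T)
        _ = ‖T‖ := mul_one _
    have hpos : (0:ℝ) < (ε / 2 / 2) ^ 2 := by positivity
    rw [div_lt_iff₀ hpos] at hK
    nlinarith [norm_nonneg (T w), norm_nonneg T]
  have anti : Antitone (fun N => ‖T - (headCLM N).comp T‖) := by
    apply antitone_nat_of_succ_le
    intro N
    refine ContinuousLinearMap.opNorm_le_bound _ (norm_nonneg (T - (headCLM N).comp T)) fun x => ?_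
    have hco : ∀ (k : ℕ), (T - (headCLM k).comp T) x = T x - headCLM k (T x) := fun k => by
      simp [ContinuousLinearMap.sub_apply]
    rw [hco]
    calc ‖T x - headCLM (N+1) (T x)‖ ≤ ‖T x - headCLM N (T x)‖ :=
          tail_norm_anti (T x) (Nat.le_succ N)
      _ = ‖(T - (headCLM N).comp T) x‖ := by rw [hco]
      _ ≤ ‖T - (headCLM N).comp T‖ * ‖x‖ := ContinuousLinearMap.le_opNorm _ _
  have tend : Tendsto (fun N => (headCLM N).comp T) atTop (𝓝 T) := by
    have hmain : ∀ ε > 0, ∃ N : ℕ, ∀ n ≥ N, dist ((headCLM n).comp T) T < ε := by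
      intro ε hε
      obtain ⟨N, hN⟩ := key (ε / 2) (half_pos hε)
      refine ⟨N, fun n hn => ?_⟩
      have hd : dist ((headCLM n).comp T) T = ‖T - (headCLM n).comp T‖ := by
        rw [dist_comm]; exact dist_eq_norm_sub T _
      rw [hd]
      calc ‖T - (headCLM n).comp T‖ ≤ ‖T - (headCLM N).comp T‖ := anti hn
        _ ≤ ε / 2 := hN
        _ < ε := half_lt_self hε
    exact Metric.tendsto_atTop.mpr hmain
  exact isCompactOperator_of_tendsto tend
    (Eventually.of_forall fun N => isCompactOperator_head_comp T N)

end Stmt13Section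
end

section
/- For every 1 ≤ p < ∞, ε > 0, and positive integers m, k, there exists N = N(p, m, k, ε) such that the ℓ_p^m-sum of m copies of ℓ_2^k embeds into ℓ_p^N with constant 1+ε (for p ≠ 2 with constant 2 suffices): there is a linear map T : (⊕_{j=1}^m ℓ_2^k)_{ℓ_p} → ℓ_p^N with ‖x‖ ≤ ‖Tx‖ ≤ (1+ε)‖x‖ for all x. -/
set_option maxHeartbeats 1000000

open scoped ENNReal NNReal
open MeasureTheory Metric Set RealInnerProductSpace

/-- Coordinatewise rounding down to the grid `δ·ℤ^k`. -/
noncomputable def rnd (δ : ℝ) {k : ℕ} (θ : EuclideanSpace ℝ (Fin k)) :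
    EuclideanSpace ℝ (Fin k) := WithLp.toLp 2 (fun j => δ * ⌊θ j / δ⌋)

lemma rnd_measurable (δ : ℝ) (k : ℕ) : Measurable (rnd δ (k := k)) := by
  have h : Measurable fun (θ : EuclideanSpace ℝ (Fin k)) (j : Fin k) =>
      δ * (⌊θ j / δ⌋ : ℝ) := by
    apply measurable_pi_lambda
    intro j
    have hj : Measurable fun θ : EuclideanSpace ℝ (Fin k) => θ j :=
      (EuclideanSpace.proj (𝕜 := ℝ) j).continuous.measurable
    exact (measurable_from_top.comp (hj.div_const δ).floor).const_mul δ
  exact (MeasurableEquiv.toLp 2 (Fin k → ℝ)).measurable.comp h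

lemma rnd_apply (δ : ℝ) {k : ℕ} (θ : EuclideanSpace ℝ (Fin k)) (j : Fin k) :
    rnd δ θ j = δ * ⌊θ j / δ⌋ := rfl

lemma rnd_close {δ : ℝ} (hδ : 0 < δ) {k : ℕ} (θ : EuclideanSpace ℝ (Fin k)) :
    ‖θ - rnd δ θ‖ ≤ δ * Real.sqrt k := by
  have hcoord : ∀ j : Fin k, |θ j - δ * ⌊θ j / δ⌋| ≤ δ := by
    intro j
    have h1 : θ j - δ * ⌊θ j / δ⌋ = δ * Int.fract (θ j / δ) := by
      rw [Int.fract]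
      field_simp
    rw [h1, abs_of_nonneg (mul_nonneg hδ.le (Int.fract_nonneg _))]
    calc δ * Int.fract (θ j / δ) ≤ δ * 1 :=
          mul_le_mul_of_nonneg_left (Int.fract_lt_one _).le hδ.le
      _ = δ := mul_one δ
  calc ‖θ - rnd δ θ‖ = Real.sqrt (∑ j, ‖(θ - rnd δ θ) j‖ ^ 2) := EuclideanSpace.norm_eq _
    _ ≤ Real.sqrt (∑ _j : Fin k, δ ^ 2) := by
        apply Real.sqrt_le_sqrt
        apply Finset.sum_le_sum
        intro j _
        have : (θ - rnd δ θ) j = θ j - δ * ⌊θ j / δ⌋ := by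
          simp [rnd_apply]
        rw [this, Real.norm_eq_abs]
        have h2 := hcoord j
        nlinarith [abs_nonneg (θ j - δ * ⌊θ j / δ⌋)]
    _ = δ * Real.sqrt k := by
        rw [Finset.sum_const, Finset.card_univ, Fintype.card_fin, nsmul_eq_mul]
        rw [Real.sqrt_mul (by positivity), Real.sqrt_sq hδ.le, mul_comm]

/-- The finite grid capturing `rnd δ` of the unit ball. -/
noncomputable def grid (δ : ℝ) (k : ℕ) : Finset (EuclideanSpace ℝ (Fin k)) := by
  classical
  exact (Finset.Icc (fun _ => ⌊-(1/δ)⌋) (fun _ => ⌊1/δ⌋) : Finset (Fin k → ℤ)).image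
    (fun z => (WithLp.toLp 2 (fun j => δ * z j) : EuclideanSpace ℝ (Fin k)))

lemma coord_le_norm {k : ℕ} (θ : EuclideanSpace ℝ (Fin k)) (j : Fin k) : |θ j| ≤ ‖θ‖ := by
  have h := abs_real_inner_le_norm (EuclideanSpace.single j (1:ℝ)) θ
  simpa [EuclideanSpace.inner_single_left, EuclideanSpace.norm_single] using h

lemma rnd_mem_grid {δ : ℝ} (hδ : 0 < δ) {k : ℕ} {θ : EuclideanSpace ℝ (Fin k)}
    (hθ : θ ∈ closedBall (0 : EuclideanSpace ℝ (Fin k)) 1) : rnd δ θ ∈ grid δ k := by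
  classical
  rw [grid]
  simp only [Finset.mem_image]
  refine ⟨fun j => ⌊θ j / δ⌋, ?_, rfl⟩
  rw [Finset.mem_Icc]
  have hn : ‖θ‖ ≤ 1 := by simpa [mem_closedBall, dist_zero_right] using hθ
  have habs : ∀ j, |θ j| ≤ 1 := fun j => (coord_le_norm θ j).trans hn
  constructor <;> refine fun j => Int.floor_le_floor ?_
  · rw [← neg_div]
    gcongr
    exact (abs_le.1 (habs j)).1
  · gcongr
    exact (abs_le.1 (habs j)).2
/-- Rotation invariance: the `q`-moment of `⟪x,·⟫` over the unit ball. -/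
lemma rot_inv {k : ℕ} (j0 : Fin k) (q : ℝ) (hq : 0 < q) (x : EuclideanSpace ℝ (Fin k)) :
    ∫⁻ θ in closedBall (0 : EuclideanSpace ℝ (Fin k)) 1, (‖⟪x, θ⟫‖₊ : ℝ≥0∞) ^ q
      = (‖x‖₊ : ℝ≥0∞) ^ q *
        ∫⁻ θ in closedBall (0 : EuclideanSpace ℝ (Fin k)) 1, (‖θ j0‖₊ : ℝ≥0∞) ^ q := by
  rcases eq_or_ne x 0 with rfl | hx
  · simp [ENNReal.zero_rpow_of_pos hq]
  · set u : EuclideanSpace ℝ (Fin k) := ‖x‖⁻¹ • x with hu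
    have hxn : ‖x‖ ≠ 0 := norm_ne_zero_iff.2 hx
    have hun : ‖u‖ = 1 := by
      rw [hu, norm_smul, norm_inv, norm_norm, inv_mul_cancel₀ hxn]
    have hcard : Module.finrank ℝ (EuclideanSpace ℝ (Fin k)) = Fintype.card (Fin k) :=
      finrank_euclideanSpace
    have horth : Orthonormal ℝ (Set.restrict {j0} (fun _ : Fin k => u)) := by
      constructor
      · intro i; exact hun
      · intro i j hij
        exact absurd (Subsingleton.elim i j) hij
    obtain ⟨b, hb⟩ := horth.exists_orthonormalBasis_extension_of_card_eq hcard
    have hbj0 : b j0 = u := hb j0 (mem_singleton _)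
    set U : EuclideanSpace ℝ (Fin k) ≃ₗᵢ[ℝ] EuclideanSpace ℝ (Fin k) := b.repr.symm with hU
    have hUe : U (EuclideanSpace.single j0 (1:ℝ)) = u := by
      rw [hU, b.repr_symm_single, hbj0]
    have hmp : MeasurePreserving U volume volume := U.measurePreserving
    have hemb : MeasurableEmbedding U := U.toHomeomorph.measurableEmbedding
    have hpre : U ⁻¹' closedBall (0 : EuclideanSpace ℝ (Fin k)) 1
        = closedBall (0 : EuclideanSpace ℝ (Fin k)) 1 := by
      ext θ
      simp [mem_closedBall, dist_zero_right, U.norm_map]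
    have key : ∀ θ : EuclideanSpace ℝ (Fin k), ⟪x, U θ⟫ = ‖x‖ * θ j0 := by
      intro θ
      have h3 : ‖x‖ • u = x := by rw [hu, smul_smul, mul_inv_cancel₀ hxn, one_smul]
      have h2 : ⟪u, U θ⟫ = θ j0 := by
        calc ⟪u, U θ⟫ = ⟪U (EuclideanSpace.single j0 (1:ℝ)), U θ⟫ := by rw [hUe]
          _ = ⟪EuclideanSpace.single j0 (1:ℝ), θ⟫ := U.inner_map_map _ _
          _ = θ j0 := by simp [EuclideanSpace.inner_single_left]
      calc ⟪x, U θ⟫ = ⟪‖x‖ • u, U θ⟫ := by rw [h3]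
        _ = ‖x‖ * ⟪u, U θ⟫ := real_inner_smul_left _ _ _
        _ = ‖x‖ * θ j0 := by rw [h2]
    calc ∫⁻ θ in closedBall (0 : EuclideanSpace ℝ (Fin k)) 1, (‖⟪x, θ⟫‖₊ : ℝ≥0∞) ^ q
        = ∫⁻ θ in U ⁻¹' closedBall (0 : EuclideanSpace ℝ (Fin k)) 1,
            (‖⟪x, U θ⟫‖₊ : ℝ≥0∞) ^ q :=
          (hmp.setLIntegral_comp_preimage_emb hemb
            (fun θ => (‖⟪x, θ⟫‖₊ : ℝ≥0∞) ^ q) _).symm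
      _ = ∫⁻ θ in closedBall (0 : EuclideanSpace ℝ (Fin k)) 1,
            (‖x‖₊ : ℝ≥0∞) ^ q * (‖θ j0‖₊ : ℝ≥0∞) ^ q := by
          rw [hpre]
          congr 1
          ext θ
          rw [key θ, nnnorm_mul, ENNReal.coe_mul, ENNReal.mul_rpow_of_nonneg _ _ hq.le]
          simp
      _ = (‖x‖₊ : ℝ≥0∞) ^ q *
            ∫⁻ θ in closedBall (0 : EuclideanSpace ℝ (Fin k)) 1, (‖θ j0‖₊ : ℝ≥0∞) ^ q := by
          rw [lintegral_const_mul']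
          exact ENNReal.rpow_ne_top_of_nonneg hq.le ENNReal.coe_ne_top

lemma block {k : ℕ} (hk : 0 < k) (p : ℝ≥0∞) [Fact (1 ≤ p)] (hp : p ≠ ⊤)
    (ε : ℝ) (hε : 0 < ε) :
    ∃ (N : ℕ) (S : EuclideanSpace ℝ (Fin k) →ₗ[ℝ] PiLp p (fun _ : Fin N => ℝ)),
      ∀ x, ‖x‖ ≤ ‖S x‖ ∧ ‖S x‖ ≤ (1 + ε) * ‖x‖ := by
  classical
  set q : ℝ := p.toReal with hqdef
  have hq1 : 1 ≤ q := by
    rw [hqdef, ← ENNReal.toReal_one]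
    exact ENNReal.toReal_mono hp Fact.out
  have hq0 : 0 < q := lt_of_lt_of_le one_pos hq1
  set j0 : Fin k := ⟨0, hk⟩
  set B : Set (EuclideanSpace ℝ (Fin k)) := closedBall 0 1 with hBdef
  have hBmeas : MeasurableSet B := measurableSet_closedBall
  set V : ℝ≥0∞ := volume B with hVdef
  have hV_top : V ≠ ⊤ := measure_closedBall_lt_top.ne
  set I₀ : ℝ≥0∞ := ∫⁻ θ in B, (‖θ j0‖₊ : ℝ≥0∞) ^ q with hI₀def
  have hI₀_le : I₀ ≤ V := by
    calc I₀ ≤ ∫⁻ _θ in B, 1 := by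
          apply setLIntegral_mono' hBmeas
          intro θ hθ
          have hn : ‖θ‖ ≤ 1 := by simpa [hBdef, mem_closedBall, dist_zero_right] using hθ
          have h1 : ‖θ j0‖ ≤ 1 := by
            rw [Real.norm_eq_abs]; exact (coord_le_norm θ j0).trans hn
          apply ENNReal.rpow_le_one _ hq0.le
          rw [← enorm_eq_nnnorm, ← ofReal_norm]
          calc ENNReal.ofReal ‖θ j0‖ ≤ ENNReal.ofReal 1 := ENNReal.ofReal_le_ofReal h1
            _ = 1 := ENNReal.ofReal_one
      _ = V := setLIntegral_one _
  have hI₀_top : I₀ ≠ ⊤ := (lt_of_le_of_lt hI₀_le hV_top.lt_top).ne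
  have hI₀_pos : 0 < I₀ := by
    set ctr : EuclideanSpace ℝ (Fin k) := (3/4 : ℝ) • EuclideanSpace.single j0 (1:ℝ) with hctr
    have hctrn : ‖ctr‖ = 3/4 := by
      rw [hctr, norm_smul, EuclideanSpace.norm_single]
      norm_num
    have hsb_sub : ball ctr (1/8) ⊆ B := by
      intro θ hθ
      rw [mem_ball] at hθ
      rw [hBdef, mem_closedBall, dist_zero_right]
      calc ‖θ‖ = ‖(θ - ctr) + ctr‖ := by rw [sub_add_cancel]
        _ ≤ ‖θ - ctr‖ + ‖ctr‖ := norm_add_le _ _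
        _ ≤ 1 := by
            rw [hctrn]
            have : ‖θ - ctr‖ < 1/8 := by rwa [← dist_eq_norm]
            linarith
    have hsb_lb : ∀ θ ∈ ball ctr (1/8),
        (ENNReal.ofReal (1/2) : ℝ≥0∞) ^ q ≤ (‖θ j0‖₊ : ℝ≥0∞) ^ q := by
      intro θ hθ
      rw [mem_ball] at hθ
      have h1 : |θ j0 - 3/4| ≤ ‖θ - ctr‖ := by
        have h2 := coord_le_norm (θ - ctr) j0
        have h3 : (θ - ctr) j0 = θ j0 - 3/4 := by
          simp [hctr, PiLp.sub_apply, PiLp.smul_apply, EuclideanSpace.single_apply]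
        rwa [h3] at h2
      have h4 : ‖θ - ctr‖ < 1/8 := by rwa [← dist_eq_norm]
      have h5 : (1:ℝ)/2 ≤ |θ j0| := by
        rcases abs_le.1 (h1.trans h4.le) with ⟨ha, hb⟩
        rw [le_abs]
        left; linarith
      apply ENNReal.rpow_le_rpow _ hq0.le
      rw [← enorm_eq_nnnorm, ← ofReal_norm, Real.norm_eq_abs]
      exact ENNReal.ofReal_le_ofReal h5
    have hlow : (ENNReal.ofReal (1/2) : ℝ≥0∞) ^ q * volume (ball ctr (1/8)) ≤ I₀ := by
      calc (ENNReal.ofReal (1/2) : ℝ≥0∞) ^ q * volume (ball ctr (1/8))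
          = ∫⁻ _θ in ball ctr (1/8), (ENNReal.ofReal (1/2) : ℝ≥0∞) ^ q := by
            rw [setLIntegral_const]
        _ ≤ ∫⁻ θ in ball ctr (1/8), (‖θ j0‖₊ : ℝ≥0∞) ^ q :=
            setLIntegral_mono' measurableSet_ball hsb_lb
        _ ≤ I₀ := lintegral_mono_set hsb_sub
    refine lt_of_lt_of_le ?_ hlow
    apply ENNReal.mul_pos
    · apply (ENNReal.rpow_pos (by norm_num) (by norm_num)).ne'
    · exact (measure_ball_pos volume ctr (by norm_num)).ne'
  set c : ℝ≥0∞ := I₀ ^ (1/q) with hcdef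
  have hc0 : c ≠ 0 := by
    simp only [hcdef, ne_eq, ENNReal.rpow_eq_zero_iff, not_or]
    constructor
    · rintro ⟨h, -⟩; exact hI₀_pos.ne' h
    · rintro ⟨h, -⟩; exact hI₀_top h
  have hcT : c ≠ ⊤ := by
    exact ENNReal.rpow_ne_top_of_nonneg (by positivity) hI₀_top
  set creal : ℝ := c.toReal with hcrealdef
  have hcreal : 0 < creal := ENNReal.toReal_pos hc0 hcT
  set ε₀ : ℝ := min (ε/4) 2⁻¹ with hε₀def
  have hε₀ : 0 < ε₀ := lt_min (by positivity) (by norm_num)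
  have hε₀ε : ε₀ ≤ ε/4 := min_le_left _ _
  have hε₀2 : ε₀ ≤ 1/2 := by
    have := min_le_right (ε/4) 2⁻¹
    linarith
  -- choose δ
  set target : ℝ≥0∞ := ENNReal.ofReal ε₀ * c with htargetdef
  have htarget0 : target ≠ 0 := by
    simp [htargetdef, hc0, ENNReal.ofReal_eq_zero, not_le, hε₀]
  have htargetT : target ≠ ⊤ := ENNReal.mul_ne_top ENNReal.ofReal_ne_top hcT
  set r : ℝ := target.toReal with hrdef
  have hr : 0 < r := ENNReal.toReal_pos htarget0 htargetT
  have hVq_top : V ^ (1/q) ≠ ⊤ := ENNReal.rpow_ne_top_of_nonneg (by positivity) hV_top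
  set Vr : ℝ := (V ^ (1/q)).toReal with hVrdef
  have hVr0 : 0 ≤ Vr := ENNReal.toReal_nonneg
  set δ : ℝ := r / (Real.sqrt k * Vr + 1) with hδdef
  have hδ : 0 < δ := div_pos hr (by positivity)
  have hδ' : ENNReal.ofReal (δ * Real.sqrt k) * V ^ (1/q) ≤ target := by
    have hA0 : 0 ≤ Real.sqrt k * Vr := by positivity
    have hkey : δ * Real.sqrt k * Vr ≤ r := by
      have h1 : δ * (Real.sqrt k * Vr) ≤ r := by
        rw [hδdef, div_mul_eq_mul_div, div_le_iff₀ (by positivity)]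
        nlinarith [hr.le]
      linarith [h1, (mul_assoc δ (Real.sqrt k) Vr).symm ▸ h1]
    calc ENNReal.ofReal (δ * Real.sqrt k) * V ^ (1/q)
        = ENNReal.ofReal (δ * Real.sqrt k) * ENNReal.ofReal Vr := by
          rw [hVrdef, ENNReal.ofReal_toReal hVq_top]
      _ = ENNReal.ofReal (δ * Real.sqrt k * Vr) := by
          rw [← ENNReal.ofReal_mul (by positivity)]
      _ ≤ ENNReal.ofReal r := ENNReal.ofReal_le_ofReal hkey
      _ = target := by rw [hrdef, ENNReal.ofReal_toReal htargetT]
  -- the grid data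
  set Λ : Finset (EuclideanSpace ℝ (Fin k)) := grid δ k with hΛdef
  set N : ℕ := Fintype.card ↥Λ with hNdef
  set e : Fin N ≃ ↥Λ := (Fintype.equivFin ↥Λ).symm with hedef
  set v : Fin N → EuclideanSpace ℝ (Fin k) := fun i => ((e i : ↥Λ) : EuclideanSpace ℝ (Fin k))
    with hvdef
  set w : Fin N → ℝ≥0∞ := fun i => volume (B ∩ rnd δ ⁻¹' {v i}) with hwdef
  have hw_fin : ∀ i, w i ≠ ⊤ := fun i =>
    ((measure_mono inter_subset_left).trans_lt hV_top.lt_top).ne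
  have key_sum : ∀ x : EuclideanSpace ℝ (Fin k),
      ∑ i, w i * (‖⟪x, v i⟫‖₊ : ℝ≥0∞) ^ q = ∫⁻ θ in B, (‖⟪x, rnd δ θ⟫‖₊ : ℝ≥0∞) ^ q := by
    intro z
    have hdec : B = ⋃ val ∈ Λ, (B ∩ rnd δ ⁻¹' {val}) := by
      apply Subset.antisymm
      · intro θ hθ
        exact mem_iUnion₂.2 ⟨rnd δ θ, rnd_mem_grid hδ hθ, hθ, rfl⟩
      · intro θ hθ
        rcases mem_iUnion₂.1 hθ with ⟨val, _, hθ', _⟩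
        exact hθ'
    have hdisj : (↑Λ : Set (EuclideanSpace ℝ (Fin k))).PairwiseDisjoint
        (fun val => B ∩ rnd δ ⁻¹' {val}) := by
      intro a _ b _ hab
      exact Disjoint.mono inf_le_right inf_le_right
        (Disjoint.preimage _ (disjoint_singleton.2 hab))
    have hmeas : ∀ val ∈ Λ, MeasurableSet (B ∩ rnd δ ⁻¹' {val}) := fun val _ =>
      hBmeas.inter ((rnd_measurable δ k) (measurableSet_singleton val))
    have hpiece : ∀ val ∈ Λ,
        ∫⁻ θ in B ∩ rnd δ ⁻¹' {val}, (‖⟪z, rnd δ θ⟫‖₊ : ℝ≥0∞) ^ q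
          = volume (B ∩ rnd δ ⁻¹' {val}) * (‖⟪z, val⟫‖₊ : ℝ≥0∞) ^ q := by
      intro val hval
      rw [setLIntegral_congr_fun (hmeas val hval)
        (fun θ hθ => ?_), setLIntegral_const, mul_comm]
      have : rnd δ θ = val := hθ.2
      rw [this]
    calc ∑ i, w i * (‖⟪z, v i⟫‖₊ : ℝ≥0∞) ^ q
        = ∑ a : ↥Λ, volume (B ∩ rnd δ ⁻¹' {(a : EuclideanSpace ℝ (Fin k))})
            * (‖⟪z, (a : EuclideanSpace ℝ (Fin k))⟫‖₊ : ℝ≥0∞) ^ q :=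
          Fintype.sum_equiv e _ _ (fun i => rfl)
      _ = ∑ val ∈ Λ, volume (B ∩ rnd δ ⁻¹' {val}) * (‖⟪z, val⟫‖₊ : ℝ≥0∞) ^ q :=
          Finset.sum_coe_sort Λ
            (fun val => volume (B ∩ rnd δ ⁻¹' {val}) * (‖⟪z, val⟫‖₊ : ℝ≥0∞) ^ q)
      _ = ∫⁻ θ in B, (‖⟪z, rnd δ θ⟫‖₊ : ℝ≥0∞) ^ q := by
          conv_rhs => rw [hdec]
          rw [lintegral_biUnion_finset hdisj hmeas]
          exact Finset.sum_congr rfl (fun val hval => (hpiece val hval).symm)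
  set c₂ : ℝ := (1 - ε₀) * creal with hc₂def
  have hc₂ : 0 < c₂ := mul_pos (by linarith) hcreal
  -- the linear map
  set S : EuclideanSpace ℝ (Fin k) →ₗ[ℝ] PiLp p (fun _ : Fin N => ℝ) :=
    { toFun := fun x => WithLp.toLp p (fun i => c₂⁻¹ * ((w i).toReal ^ (1/q) * ⟪x, v i⟫))
      map_add' := by
        intro x y
        ext i
        show c₂⁻¹ * ((w i).toReal ^ (1/q) * ⟪x + y, v i⟫)
          = c₂⁻¹ * ((w i).toReal ^ (1/q) * ⟪x, v i⟫)
            + c₂⁻¹ * ((w i).toReal ^ (1/q) * ⟪y, v i⟫)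
        rw [inner_add_left]; ring
      map_smul' := by
        intro a x
        ext i
        show c₂⁻¹ * ((w i).toReal ^ (1/q) * ⟪a • x, v i⟫)
          = a * (c₂⁻¹ * ((w i).toReal ^ (1/q) * ⟪x, v i⟫))
        rw [real_inner_smul_left]; ring } with hSdef
  refine ⟨N, S, fun x => ?_⟩
  -- per-x analysis
  set M : ℝ≥0∞ := ∫⁻ θ in B, (‖⟪x, rnd δ θ⟫‖₊ : ℝ≥0∞) ^ q with hMdef
  set L : ℝ≥0∞ := ∫⁻ θ in B, (‖⟪x, θ⟫‖₊ : ℝ≥0∞) ^ q with hLdef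
  set D : ℝ≥0∞ := ∫⁻ θ in B, (‖⟪x, θ - rnd δ θ⟫‖₊ : ℝ≥0∞) ^ q with hDdef
  have hL : L ^ (1/q) = (‖x‖₊ : ℝ≥0∞) * c := by
    rw [hLdef, rot_inv j0 q hq0 x, ENNReal.mul_rpow_of_nonneg _ _ (by positivity),
      ← ENNReal.rpow_mul, mul_one_div, div_self hq0.ne', ENNReal.rpow_one]
  have hD : D ^ (1/q) ≤ ENNReal.ofReal ‖x‖ * target := by
    have hpt : ∀ θ : EuclideanSpace ℝ (Fin k),
        (‖⟪x, θ - rnd δ θ⟫‖₊ : ℝ≥0∞) ^ q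
          ≤ (ENNReal.ofReal (‖x‖ * (δ * Real.sqrt k))) ^ q := by
      intro θ
      apply ENNReal.rpow_le_rpow _ hq0.le
      rw [← enorm_eq_nnnorm, ← ofReal_norm]
      apply ENNReal.ofReal_le_ofReal
      calc ‖⟪x, θ - rnd δ θ⟫‖ = |⟪x, θ - rnd δ θ⟫| := Real.norm_eq_abs _
        _ ≤ ‖x‖ * ‖θ - rnd δ θ‖ := abs_real_inner_le_norm _ _
        _ ≤ ‖x‖ * (δ * Real.sqrt k) :=
            mul_le_mul_of_nonneg_left (rnd_close hδ θ) (norm_nonneg x)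
    have hDle : D ≤ (ENNReal.ofReal (‖x‖ * (δ * Real.sqrt k))) ^ q * V := by
      calc D ≤ ∫⁻ _θ in B, (ENNReal.ofReal (‖x‖ * (δ * Real.sqrt k))) ^ q :=
            setLIntegral_mono' hBmeas (fun θ _ => hpt θ)
        _ = (ENNReal.ofReal (‖x‖ * (δ * Real.sqrt k))) ^ q * V := setLIntegral_const _ _
    calc D ^ (1/q) ≤ ((ENNReal.ofReal (‖x‖ * (δ * Real.sqrt k))) ^ q * V) ^ (1/q) :=
          ENNReal.rpow_le_rpow hDle (by positivity)
      _ = ENNReal.ofReal (‖x‖ * (δ * Real.sqrt k)) * V ^ (1/q) := by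
          rw [ENNReal.mul_rpow_of_nonneg _ _ (by positivity), ← ENNReal.rpow_mul,
            mul_one_div, div_self hq0.ne', ENNReal.rpow_one]
      _ = ENNReal.ofReal ‖x‖ * (ENNReal.ofReal (δ * Real.sqrt k) * V ^ (1/q)) := by
          rw [ENNReal.ofReal_mul (norm_nonneg x), mul_assoc]
      _ ≤ ENNReal.ofReal ‖x‖ * target := mul_le_mul_right hδ' _
  have hcontg : Measurable fun θ : EuclideanSpace ℝ (Fin k) => (‖⟪x, θ⟫‖₊ : ℝ≥0∞) :=
    (ENNReal.continuous_coe.comp (innerSL ℝ x).continuous.nnnorm).measurable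
  have hm1 : AEMeasurable (fun θ => (‖⟪x, rnd δ θ⟫‖₊ : ℝ≥0∞)) (volume.restrict B) :=
    (hcontg.comp (rnd_measurable δ k)).aemeasurable
  have hm0 : AEMeasurable (fun θ : EuclideanSpace ℝ (Fin k) => (‖⟪x, θ⟫‖₊ : ℝ≥0∞))
      (volume.restrict B) := hcontg.aemeasurable
  have hm2 : AEMeasurable (fun θ => (‖⟪x, θ - rnd δ θ⟫‖₊ : ℝ≥0∞)) (volume.restrict B) :=
    (hcontg.comp (measurable_id.sub (rnd_measurable δ k))).aemeasurable
  have tri1 : M ^ (1/q) ≤ L ^ (1/q) + D ^ (1/q) := by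
    have hpt : ∀ θ : EuclideanSpace ℝ (Fin k),
        (‖⟪x, rnd δ θ⟫‖₊ : ℝ≥0∞)
          ≤ (‖⟪x, θ⟫‖₊ : ℝ≥0∞) + (‖⟪x, θ - rnd δ θ⟫‖₊ : ℝ≥0∞) := by
      intro θ
      rw [← ENNReal.coe_add]
      apply ENNReal.coe_le_coe.2
      have h1 : ⟪x, rnd δ θ⟫ = ⟪x, θ⟫ - ⟪x, θ - rnd δ θ⟫ := by
        rw [inner_sub_right]; ring
      rw [h1]
      exact nnnorm_sub_le _ _
    have h2 : M ≤ ∫⁻ θ in B,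
        ((fun θ => (‖⟪x, θ⟫‖₊ : ℝ≥0∞)) + fun θ => (‖⟪x, θ - rnd δ θ⟫‖₊ : ℝ≥0∞)) θ ^ q :=
      lintegral_mono (fun θ => ENNReal.rpow_le_rpow (hpt θ) hq0.le)
    calc M ^ (1/q) ≤ (∫⁻ θ in B,
          ((fun θ => (‖⟪x, θ⟫‖₊ : ℝ≥0∞)) + fun θ => (‖⟪x, θ - rnd δ θ⟫‖₊ : ℝ≥0∞)) θ ^ q)
            ^ (1/q) := ENNReal.rpow_le_rpow h2 (by positivity)
      _ ≤ L ^ (1/q) + D ^ (1/q) := ENNReal.lintegral_Lp_add_le hm0 hm2 hq1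
  have tri2 : L ^ (1/q) ≤ M ^ (1/q) + D ^ (1/q) := by
    have hpt : ∀ θ : EuclideanSpace ℝ (Fin k),
        (‖⟪x, θ⟫‖₊ : ℝ≥0∞)
          ≤ (‖⟪x, rnd δ θ⟫‖₊ : ℝ≥0∞) + (‖⟪x, θ - rnd δ θ⟫‖₊ : ℝ≥0∞) := by
      intro θ
      rw [← ENNReal.coe_add]
      apply ENNReal.coe_le_coe.2
      have h1 : ⟪x, θ⟫ = ⟪x, rnd δ θ⟫ + ⟪x, θ - rnd δ θ⟫ := by
        rw [inner_sub_right]; ring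
      rw [h1]
      exact nnnorm_add_le _ _
    have h2 : L ≤ ∫⁻ θ in B,
        ((fun θ => (‖⟪x, rnd δ θ⟫‖₊ : ℝ≥0∞)) + fun θ => (‖⟪x, θ - rnd δ θ⟫‖₊ : ℝ≥0∞)) θ ^ q :=
      lintegral_mono (fun θ => ENNReal.rpow_le_rpow (hpt θ) hq0.le)
    calc L ^ (1/q) ≤ (∫⁻ θ in B,
          ((fun θ => (‖⟪x, rnd δ θ⟫‖₊ : ℝ≥0∞)) + fun θ => (‖⟪x, θ - rnd δ θ⟫‖₊ : ℝ≥0∞)) θ ^ q)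
            ^ (1/q) := ENNReal.rpow_le_rpow h2 (by positivity)
      _ ≤ M ^ (1/q) + D ^ (1/q) := ENNReal.lintegral_Lp_add_le hm1 hm2 hq1
  have hMfin : M ^ (1/q) ≠ ⊤ := by
    refine ne_top_of_le_ne_top ?_ tri1
    refine ENNReal.add_ne_top.2 ⟨?_, ?_⟩
    · rw [hL]; exact ENNReal.mul_ne_top ENNReal.coe_ne_top hcT
    · exact ne_top_of_le_ne_top
        (ENNReal.mul_ne_top ENNReal.ofReal_ne_top htargetT) hD
  set Mq : ℝ := (M ^ (1/q)).toReal with hMqdef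
  have hMq0 : 0 ≤ Mq := ENNReal.toReal_nonneg
  have hSx : ∀ i, S x i = c₂⁻¹ * ((w i).toReal ^ (1/q) * ⟪x, v i⟫) := fun i => rfl
  have hnorm : ‖S x‖ = c₂⁻¹ * Mq := by
    have hsum : ∑ i, ‖S x i‖ ^ q = (c₂⁻¹) ^ q * M.toReal := by
      have hterm : ∀ i : Fin N, ‖S x i‖ ^ q
          = (c₂⁻¹) ^ q * ((w i).toReal * |⟪x, v i⟫| ^ q) := by
        intro i
        rw [hSx i, Real.norm_eq_abs, abs_mul, abs_mul,
          abs_of_nonneg (inv_nonneg.2 hc₂.le),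
          abs_of_nonneg (Real.rpow_nonneg ENNReal.toReal_nonneg _),
          Real.mul_rpow (inv_nonneg.2 hc₂.le) (by positivity),
          Real.mul_rpow (Real.rpow_nonneg ENNReal.toReal_nonneg _) (abs_nonneg _),
          ← Real.rpow_mul ENNReal.toReal_nonneg, one_div_mul_cancel hq0.ne',
          Real.rpow_one]
      rw [Finset.sum_congr rfl (fun i _ => hterm i), ← Finset.mul_sum]
      congr 1
      rw [hMdef, ← key_sum x, ENNReal.toReal_sum (fun i _ => ?_)]
      · apply Finset.sum_congr rfl
        intro i _
        rw [ENNReal.toReal_mul]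
        congr 1
        rw [← ENNReal.toReal_rpow, ENNReal.coe_toReal, coe_nnnorm, Real.norm_eq_abs]
      · exact ENNReal.mul_ne_top (hw_fin i)
          (ENNReal.rpow_ne_top_of_nonneg hq0.le ENNReal.coe_ne_top)
    rw [PiLp.norm_eq_sum (by rw [← hqdef]; exact hq0) (S x), ← hqdef, hsum,
      Real.mul_rpow (by positivity) ENNReal.toReal_nonneg,
      ← Real.rpow_mul (inv_nonneg.2 hc₂.le), mul_one_div_cancel hq0.ne',
      Real.rpow_one, ENNReal.toReal_rpow]
  have hub : Mq ≤ ‖x‖ * creal * (1 + ε₀) := by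
    have h := tri1.trans (add_le_add (le_of_eq hL) hD)
    have hfin : (‖x‖₊ : ℝ≥0∞) * c + ENNReal.ofReal ‖x‖ * target ≠ ⊤ :=
      ENNReal.add_ne_top.2 ⟨ENNReal.mul_ne_top ENNReal.coe_ne_top hcT,
        ENNReal.mul_ne_top ENNReal.ofReal_ne_top htargetT⟩
    have h2 := ENNReal.toReal_mono hfin h
    rw [ENNReal.toReal_add (ENNReal.mul_ne_top ENNReal.coe_ne_top hcT)
        (ENNReal.mul_ne_top ENNReal.ofReal_ne_top htargetT),
      ENNReal.toReal_mul, ENNReal.toReal_mul, ENNReal.coe_toReal, coe_nnnorm,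
      ENNReal.toReal_ofReal (norm_nonneg x), htargetdef, ENNReal.toReal_mul,
      ENNReal.toReal_ofReal hε₀.le] at h2
    have h3 : ‖x‖ * creal * (1 + ε₀) = ‖x‖ * c.toReal + ‖x‖ * (ε₀ * c.toReal) := by
      rw [hcrealdef]; ring
    rw [hMqdef]
    linarith
  have hlb : ‖x‖ * creal * (1 - ε₀) ≤ Mq := by
    have h := tri2.trans (add_le_add le_rfl hD)
    rw [hL] at h
    have hfin : M ^ (1/q) + ENNReal.ofReal ‖x‖ * target ≠ ⊤ :=
      ENNReal.add_ne_top.2 ⟨hMfin, ENNReal.mul_ne_top ENNReal.ofReal_ne_top htargetT⟩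
    have h2 := ENNReal.toReal_mono hfin h
    rw [ENNReal.toReal_add hMfin (ENNReal.mul_ne_top ENNReal.ofReal_ne_top htargetT),
      ENNReal.toReal_mul, ENNReal.toReal_mul, ENNReal.coe_toReal, coe_nnnorm,
      ENNReal.toReal_ofReal (norm_nonneg x), htargetdef, ENNReal.toReal_mul,
      ENNReal.toReal_ofReal hε₀.le] at h2
    have h3 : ‖x‖ * creal * (1 - ε₀) = ‖x‖ * c.toReal - ‖x‖ * (ε₀ * c.toReal) := by
      rw [hcrealdef]; ring
    rw [hMqdef]
    linarith
  constructor
  · rw [hnorm]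
    have h1 : c₂ * ‖x‖ ≤ Mq := by
      have h2 : (1 - ε₀) * creal * ‖x‖ = ‖x‖ * creal * (1 - ε₀) := by ring
      rw [hc₂def, h2]
      exact hlb
    calc ‖x‖ = c₂⁻¹ * (c₂ * ‖x‖) := by field_simp
      _ ≤ c₂⁻¹ * Mq := mul_le_mul_of_nonneg_left h1 (inv_nonneg.2 hc₂.le)
  · rw [hnorm]
    have key : (1 + ε₀) ≤ (1 + ε) * (1 - ε₀) := by nlinarith
    calc c₂⁻¹ * Mq ≤ c₂⁻¹ * (‖x‖ * creal * (1 + ε₀)) :=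
          mul_le_mul_of_nonneg_left hub (inv_nonneg.2 hc₂.le)
      _ ≤ (1 + ε) * ‖x‖ := by
          rw [inv_mul_le_iff₀ hc₂, hc₂def]
          nlinarith [mul_le_mul_of_nonneg_left key (mul_nonneg hcreal.le (norm_nonneg x))]

/-- For every `1 ≤ p < ∞`, `ε > 0` and positive integers `m, k`, there exists `N` such
that the `ℓ_p^m`-sum of `m` copies of `ℓ_2^k` embeds into `ℓ_p^N` with constant `1 + ε`:
there is a linear map `T` with `‖x‖ ≤ ‖T x‖ ≤ (1+ε)‖x‖` for all `x`. -/
theorem stmt_14 (p : ℝ≥0∞) [Fact (1 ≤ p)] (hp : p ≠ ⊤) (ε : ℝ) (hε : 0 < ε)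
    (m k : ℕ) (hm : 0 < m) (hk : 0 < k) :
    ∃ (N : ℕ) (T : PiLp p (fun _ : Fin m => EuclideanSpace ℝ (Fin k)) →ₗ[ℝ]
        PiLp p (fun _ : Fin N => ℝ)),
      ∀ x, ‖x‖ ≤ ‖T x‖ ∧ ‖T x‖ ≤ (1 + ε) * ‖x‖ := by
  obtain ⟨N₀, S, hS⟩ := block hk p hp ε hε
  set q : ℝ := p.toReal with hqdef
  have hq1 : 1 ≤ q := by
    rw [hqdef, ← ENNReal.toReal_one]
    exact ENNReal.toReal_mono hp Fact.out
  have hq0 : 0 < q := lt_of_lt_of_le one_pos hq1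
  have hq0' : 0 < p.toReal := hq0
  set T : PiLp p (fun _ : Fin m => EuclideanSpace ℝ (Fin k)) →ₗ[ℝ]
      PiLp p (fun _ : Fin (m * N₀) => ℝ) :=
    { toFun := fun x => WithLp.toLp p (fun j : Fin (m * N₀) =>
        S (x (finProdFinEquiv.symm j).1) (finProdFinEquiv.symm j).2)
      map_add' := by
        intro x y
        ext j
        show S ((x + y) (finProdFinEquiv.symm j).1) (finProdFinEquiv.symm j).2 = _
        have h1 : (x + y) (finProdFinEquiv.symm j).1
            = x (finProdFinEquiv.symm j).1 + y (finProdFinEquiv.symm j).1 := rfl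
        rw [h1, S.map_add]
        rfl
      map_smul' := by
        intro a x
        ext j
        show S ((a • x) (finProdFinEquiv.symm j).1) (finProdFinEquiv.symm j).2 = _
        have h1 : (a • x) (finProdFinEquiv.symm j).1
            = a • (x (finProdFinEquiv.symm j).1) := rfl
        rw [h1, S.map_smul]
        rfl } with hTdef
  refine ⟨m * N₀, T, fun x => ?_⟩
  have hSq : ∀ y : EuclideanSpace ℝ (Fin k), ∑ l, ‖S y l‖ ^ q = ‖S y‖ ^ q := by
    intro y
    rw [PiLp.norm_eq_sum hq0' (S y), ← Real.rpow_mul (by positivity),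
      one_div_mul_cancel hq0.ne', Real.rpow_one]
  have hsum : ∑ j, ‖T x j‖ ^ q = ∑ i, ‖S (x i)‖ ^ q := by
    calc ∑ j, ‖T x j‖ ^ q
        = ∑ pr : Fin m × Fin N₀, ‖S (x pr.1) pr.2‖ ^ q := by
          apply Fintype.sum_equiv (finProdFinEquiv.symm)
          intro j
          rfl
      _ = ∑ i, ∑ l, ‖S (x i) l‖ ^ q :=
          Fintype.sum_prod_type (f := fun pr : Fin m × Fin N₀ => ‖S (x pr.1) pr.2‖ ^ q)
      _ = ∑ i, ‖S (x i)‖ ^ q := Finset.sum_congr rfl (fun i _ => hSq (x i))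
  have hxnorm : ‖x‖ = (∑ i, ‖x i‖ ^ q) ^ (1/q) := PiLp.norm_eq_sum hq0' x
  have hTx : ‖T x‖ = (∑ i, ‖S (x i)‖ ^ q) ^ (1/q) := by
    rw [PiLp.norm_eq_sum hq0' (T x)]
    rw [← hqdef, hsum]
  constructor
  · rw [hTx, hxnorm]
    apply Real.rpow_le_rpow (by positivity) _ (by positivity)
    apply Finset.sum_le_sum
    intro i _
    exact Real.rpow_le_rpow (norm_nonneg _) (hS (x i)).1 hq0.le
  · rw [hTx, hxnorm]
    have h1 : ∑ i, ‖S (x i)‖ ^ q ≤ (1 + ε) ^ q * ∑ i, ‖x i‖ ^ q := by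
      rw [Finset.mul_sum]
      apply Finset.sum_le_sum
      intro i _
      calc ‖S (x i)‖ ^ q ≤ ((1 + ε) * ‖x i‖) ^ q :=
            Real.rpow_le_rpow (norm_nonneg _) (hS (x i)).2 hq0.le
        _ = (1 + ε) ^ q * ‖x i‖ ^ q := Real.mul_rpow (by linarith) (norm_nonneg _)
    calc (∑ i, ‖S (x i)‖ ^ q) ^ (1/q)
        ≤ ((1 + ε) ^ q * ∑ i, ‖x i‖ ^ q) ^ (1/q) :=
          Real.rpow_le_rpow (by positivity) h1 (by positivity)
      _ = (1 + ε) * (∑ i, ‖x i‖ ^ q) ^ (1/q) := by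
          rw [Real.mul_rpow (by positivity) (by positivity),
            ← Real.rpow_mul (by linarith), mul_one_div_cancel hq0.ne', Real.rpow_one]
end

section
/- For 1 ≤ p < 2, every bounded linear operator T from ℓ_p to ℓ_2 is strictly singular: T is not an isomorphism onto its image when restricted to any infinite-dimensional closed subspace of ℓ_p. -/
open scoped ENNReal NNReal



-- sign selection lemma
lemma aux_sign_select {F : Type*} [NormedAddCommGroup F] [InnerProductSpace ℝ F]
    (v : ℕ → F) (n : ℕ) :
    ∃ ε : ℕ → ℝ, (∀ i, ε i = 1 ∨ ε i = -1) ∧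
      ‖∑ i ∈ Finset.range n, ε i • v i‖ ^ 2 ≤ ∑ i ∈ Finset.range n, ‖v i‖ ^ 2 := by
  induction n with
  | zero => exact ⟨fun _ => 1, fun _ => Or.inl rfl, by simp⟩
  | succ n ih =>
    obtain ⟨ε, hε, hle⟩ := ih
    set s := ∑ i ∈ Finset.range n, ε i • v i with hs
    have par := parallelogram_law_with_norm ℝ s (v n)
    have hupd : ∀ a : ℝ, ∑ i ∈ Finset.range (n+1), Function.update ε n a i • v i
        = s + a • v n := by
      intro a
      rw [Finset.sum_range_succ, Function.update_self]
      congr 1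
      apply Finset.sum_congr rfl
      intro i hi
      rw [Function.update_of_ne (Finset.mem_range.1 hi).ne]
    rcases le_total ‖s + v n‖ ‖s - v n‖ with h | h
    · refine ⟨Function.update ε n 1, ?_, ?_⟩
      · intro i
        rcases eq_or_ne i n with rfl | hne
        · simp
        · rw [Function.update_of_ne hne]; exact hε i
      · rw [hupd, Finset.sum_range_succ, one_smul]
        nlinarith [norm_nonneg (s + v n), norm_nonneg (s - v n)]
    · refine ⟨Function.update ε n (-1), ?_, ?_⟩
      · intro i
        rcases eq_or_ne i n with rfl | hne
        · simp
        · rw [Function.update_of_ne hne]; exact hε i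
      · rw [hupd, Finset.sum_range_succ, neg_one_smul, ← sub_eq_add_neg]
        nlinarith [norm_nonneg (s + v n), norm_nonneg (s - v n)]


lemma aux_vanish (p : ℝ≥0∞) [Fact (1 ≤ p)] (Y : Submodule ℝ (lp (fun _ : ℕ => ℝ) p))
    (hY : ¬ FiniteDimensional ℝ Y) (N : ℕ) :
    ∃ y : lp (fun _ : ℕ => ℝ) p, y ∈ Y ∧ ‖y‖ = 1 ∧ ∀ k < N, y k = 0 := by
  classical
  set f : Y →ₗ[ℝ] (Fin N → ℝ) :=
    { toFun := fun z => fun k => (z : lp (fun _ : ℕ => ℝ) p) k.val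
      map_add' := by
        intro z w
        funext k
        simp [lp.coeFn_add]
      map_smul' := by
        intro c z
        funext k
        simp [lp.coeFn_smul] } with hf
  have hker : LinearMap.ker f ≠ ⊥ := by
    intro h
    exact hY (FiniteDimensional.of_injective f (LinearMap.ker_eq_bot.1 h))
  obtain ⟨z, hz, hz0⟩ := Submodule.exists_mem_ne_zero_of_ne_bot hker
  have hzlp : (z : lp (fun _ : ℕ => ℝ) p) ≠ 0 := by
    simpa using hz0
  have hnz : ‖(z : lp (fun _ : ℕ => ℝ) p)‖ ≠ 0 := norm_ne_zero_iff.2 hzlp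
  refine ⟨‖(z : lp (fun _ : ℕ => ℝ) p)‖⁻¹ • (z : lp (fun _ : ℕ => ℝ) p),
    Y.smul_mem _ z.2, ?_, ?_⟩
  · rw [norm_smul, norm_inv, norm_norm, inv_mul_cancel₀ hnz]
  · intro k hk
    have hcoord : (z : lp (fun _ : ℕ => ℝ) p) k = 0 := by
      have := congrFun (LinearMap.mem_ker.1 hz) ⟨k, hk⟩
      simpa [hf] using this
    rw [lp.coeFn_smul]
    simp [hcoord]

lemma aux_tail (p : ℝ≥0∞) [Fact (1 ≤ p)] (hq : 0 < p.toReal)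
    (y : lp (fun _ : ℕ => ℝ) p) {e : ℝ} (he : 0 < e) :
    ∃ M : ℕ, ∀ S : Finset ℕ, (∀ k ∈ S, M ≤ k) →
      ∑ k ∈ S, ‖y k‖ ^ p.toReal ≤ e := by
  have hsum := lp.hasSum_norm hq y
  set t := ‖y‖ ^ p.toReal with ht
  have htend := hsum.tendsto_sum_nat
  have : ∀ᶠ M in Filter.atTop, t - e ≤ ∑ k ∈ Finset.range M, ‖y k‖ ^ p.toReal :=
    htend.eventually (eventually_ge_nhds (by linarith))
  obtain ⟨M, hM⟩ := this.exists
  refine ⟨M, fun S hS => ?_⟩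
  have hnn : ∀ k, 0 ≤ ‖y k‖ ^ p.toReal := fun k => Real.rpow_nonneg (norm_nonneg _) _
  have hdisj : Disjoint S (Finset.range M) := by
    rw [Finset.disjoint_left]
    intro k hk hk'
    exact absurd (Finset.mem_range.1 hk') (not_lt.2 (hS k hk))
  have hle : ∑ k ∈ S ∪ Finset.range M, ‖y k‖ ^ p.toReal ≤ t := by
    rw [ht, lp.norm_rpow_eq_tsum hq]
    exact Summable.sum_le_tsum _ (fun k _ => hnn k) (hsum.summable)
  rw [Finset.sum_union hdisj] at hle
  linarith


noncomputable def auxWin (p : ℝ≥0∞) [Fact (1 ≤ p)] (S : Finset ℕ) :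
    lp (fun _ : ℕ => ℝ) p →ₗ[ℝ] PiLp p (fun _ : S => ℝ) where
  toFun x := WithLp.toLp p (fun k : S => x k.val)
  map_add' x y := by ext k; simp [lp.coeFn_add]
  map_smul' c x := by ext k; simp [lp.coeFn_smul]

lemma auxWin_rpow (p : ℝ≥0∞) [Fact (1 ≤ p)] (hq : 0 < p.toReal) (S : Finset ℕ)
    (x : lp (fun _ : ℕ => ℝ) p) :
    ‖auxWin p S x‖ ^ p.toReal = ∑ k ∈ S, ‖x k‖ ^ p.toReal := by
  rw [PiLp.norm_eq_sum hq, ← Real.rpow_mul (by positivity), one_div,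
    inv_mul_cancel₀ hq.ne', Real.rpow_one]
  rw [← Finset.sum_coe_sort S (fun k => ‖x k‖ ^ p.toReal)]
  rfl

lemma auxWin_le (p : ℝ≥0∞) [Fact (1 ≤ p)] (hq : 0 < p.toReal) (S : Finset ℕ)
    (x : lp (fun _ : ℕ => ℝ) p) : ‖auxWin p S x‖ ≤ ‖x‖ := by
  have h1 : ‖auxWin p S x‖ ^ p.toReal ≤ ‖x‖ ^ p.toReal := by
    rw [auxWin_rpow p hq, lp.norm_rpow_eq_tsum hq]
    exact Summable.sum_le_tsum _ (fun k _ => Real.rpow_nonneg (norm_nonneg _) _)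
      ((lp.memℓp x).summable hq)
  by_contra h
  push_neg at h
  exact absurd (Real.rpow_lt_rpow (norm_nonneg _) h hq) (not_lt.2 h1)


set_option maxHeartbeats 2000000 in
/-- For `1 ≤ p < 2`, every bounded linear operator `T : ℓ_p → ℓ_2` is strictly
singular: for every infinite-dimensional closed subspace `Y ⊆ ℓ_p` and every `c > 0`
there is a nonzero `y ∈ Y` with `‖T y‖ < c ‖y‖`. -/
theorem stmt_15 (p : ℝ≥0∞) [Fact (1 ≤ p)] (hp : p < 2)
    (T : lp (fun _ : ℕ => ℝ) p →L[ℝ] lp (fun _ : ℕ => ℝ) 2) :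
    ∀ Y : Submodule ℝ (lp (fun _ : ℕ => ℝ) p),
      IsClosed (Y : Set (lp (fun _ : ℕ => ℝ) p)) →
      ¬ FiniteDimensional ℝ Y →
      ∀ c : ℝ, 0 < c → ∃ y ∈ Y, y ≠ 0 ∧ ‖T y‖ < c * ‖y‖ := by
  classical
  intro Y _hclosed hYfd c hc
  by_contra hcon
  push_neg at hcon
  have hbelow : ∀ y ∈ Y, c * ‖y‖ ≤ ‖T y‖ := by
    intro y hy
    rcases eq_or_ne y 0 with rfl | hne
    · simp
    · exact hcon y hy hne
  -- basic exponent facts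
  have hptop : p ≠ ∞ := ne_top_of_lt hp
  set q := p.toReal with hqdef
  have hq1 : (1 : ℝ) ≤ q := by
    have h := ENNReal.toReal_mono hptop (Fact.out : (1:ℝ≥0∞) ≤ p)
    simpa using h
  have hq0 : (0 : ℝ) < q := by linarith
  have hq2 : q < 2 := by
    have h := (ENNReal.toReal_lt_toReal hptop (by norm_num : (2:ℝ≥0∞) ≠ ⊤)).2 hp
    simpa using h
  have ha0 : (0:ℝ) < 2/q - 1 := by
    have : (1:ℝ) < 2/q := (one_lt_div hq0).2 hq2
    linarith
  -- choose n
  have htend : Filter.Tendsto (fun m : ℕ => ((m:ℝ)) ^ (2/q - 1)) Filter.atTop Filter.atTop :=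
    (tendsto_rpow_atTop ha0).comp tendsto_natCast_atTop_atTop
  obtain ⟨n, hn1, hna⟩ :
      ∃ n : ℕ, 1 ≤ n ∧ 4 * ‖T‖^2 / c^2 < ((n:ℝ)) ^ (2/q - 1) := by
    have h1 := htend.eventually_gt_atTop (4 * ‖T‖^2 / c^2)
    have h2 : ∀ᶠ m : ℕ in Filter.atTop, 1 ≤ m := Filter.eventually_ge_atTop 1
    obtain ⟨m, hm1, hm2⟩ := (h2.and h1).exists
    exact ⟨m, hm1, hm2⟩
  set δ : ℝ := 1 / (2 * (n + 1)) with hδdef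
  have hδ0 : 0 < δ := by positivity
  have hδ1 : δ ≤ 1/4 := by
    rw [hδdef]
    rw [div_le_div_iff₀ (by positivity) (by norm_num)]
    have : (1:ℝ) ≤ n := by exact_mod_cast hn1
    nlinarith
  have hδq0 : (0:ℝ) < δ ^ q := Real.rpow_pos_of_pos hδ0 q
  -- key construction step
  have key : ∀ N : ℕ, ∃ M : ℕ, ∃ y : lp (fun _ : ℕ => ℝ) p,
      N < M ∧ y ∈ Y ∧ ‖y‖ = 1 ∧ (∀ k < N, y k = 0) ∧
      ∀ S : Finset ℕ, (∀ k ∈ S, M ≤ k) → ∑ k ∈ S, ‖y k‖ ^ q ≤ δ ^ q := by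
    intro N
    obtain ⟨y, hyY, hy1, hy0⟩ := aux_vanish p Y hYfd N
    obtain ⟨M₀, hM₀⟩ := aux_tail p hq0 y hδq0
    refine ⟨max (N+1) M₀, y, lt_of_lt_of_le (Nat.lt_succ_self N) (le_max_left _ _),
      hyY, hy1, hy0, fun S hS => hM₀ S (fun k hk => le_trans (le_max_right _ _) (hS k hk))⟩
  choose M yf hNM hmem hnorm hzero htail using key
  set Nf : ℕ → ℕ := fun i => Nat.rec 0 (fun _ prev => M prev) i with hNf
  have hNfsucc : ∀ i, Nf (i+1) = M (Nf i) := fun i => rfl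
  have hNmono : StrictMono Nf :=
    strictMono_nat_of_lt_succ (fun i => by rw [hNfsucc]; exact hNM (Nf i))
  set ys : ℕ → lp (fun _ : ℕ => ℝ) p := fun i => yf (Nf i) with hys
  -- sign selection
  obtain ⟨ε, hεpm, hεle⟩ := aux_sign_select (fun i => T (ys i)) n
  have hεn : ∀ i, ‖ε i‖ = 1 := by
    intro i
    rcases hεpm i with h | h <;> simp [h]
  set x := ∑ i ∈ Finset.range n, ε i • ys i with hx
  have hxY : x ∈ Y := Submodule.sum_mem _ (fun i _ => Y.smul_mem _ (hmem (Nf i)))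
  -- upper bound
  have hTx : T x = ∑ i ∈ Finset.range n, ε i • T (ys i) := by
    rw [hx, map_sum]
    exact Finset.sum_congr rfl (fun i _ => T.map_smul _ _)
  have hTle : ‖T x‖ ^ 2 ≤ (n : ℝ) * ‖T‖ ^ 2 := by
    rw [hTx]
    refine le_trans hεle ?_
    have hterm : ∀ i ∈ Finset.range n, ‖T (ys i)‖ ^ 2 ≤ ‖T‖ ^ 2 := by
      intro i _
      have h1 : ‖T (ys i)‖ ≤ ‖T‖ := by
        have := T.le_opNorm (ys i)
        simpa [hys, hnorm (Nf i)] using this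
      exact pow_le_pow_left₀ (norm_nonneg _) h1 2
    calc ∑ i ∈ Finset.range n, ‖T (ys i)‖ ^ 2
        ≤ ∑ _i ∈ Finset.range n, ‖T‖ ^ 2 := Finset.sum_le_sum hterm
      _ = (n : ℝ) * ‖T‖ ^ 2 := by
          rw [Finset.sum_const, Finset.card_range, nsmul_eq_mul]
  -- per-window lower bound
  have hwin : ∀ i, i < n →
      (1:ℝ)/2 ≤ ‖auxWin p (Finset.Ico (Nf i) (Nf (i+1))) x‖ := by
    intro i hi
    set W := Finset.Ico (Nf i) (Nf (i+1)) with hW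
    set R := auxWin p W with hR
    -- structure of R x
    have hRx : R x = (∑ j ∈ Finset.range i, ε j • R (ys j)) + ε i • R (ys i) := by
      have h1 : R x = ∑ j ∈ Finset.range n, ε j • R (ys j) := by
        rw [hx, map_sum]
        exact Finset.sum_congr rfl (fun j _ => R.map_smul _ _)
      have hvan : ∀ j ∈ Finset.range n, j ∉ Finset.range (i+1) → ε j • R (ys j) = 0 := by
        intro j _ hj
        have hij : i + 1 ≤ j := by
          simpa using Finset.mem_range.not.1 hj |> not_lt.1
        have hz : R (ys j) = 0 := by
          ext k
          have hk : (k : ℕ) < Nf (i+1) := (Finset.mem_Ico.1 k.2).2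
          have hk2 : (k : ℕ) < Nf j := lt_of_lt_of_le hk (hNmono.monotone hij)
          exact hzero (Nf j) k hk2
        rw [hz, smul_zero]
      rw [h1, ← Finset.sum_subset (Finset.range_subset_range.2 (by omega : i + 1 ≤ n)) hvan,
        Finset.sum_range_succ]
    -- small interference terms
    have hsmall : ∀ j, j < i → ‖R (ys j)‖ ≤ δ := by
      intro j hj
      have hb : ‖R (ys j)‖ ^ q ≤ δ ^ q := by
        rw [hR, auxWin_rpow p hq0]
        refine htail (Nf j) W (fun k hk => ?_)
        have h1 : Nf (j+1) ≤ Nf i := hNmono.monotone (Nat.succ_le_of_lt hj)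
        have h2 : Nf i ≤ k := (Finset.mem_Ico.1 hk).1
        have h3 : M (Nf j) = Nf (j+1) := (hNfsucc j).symm
        omega
      by_contra h
      push_neg at h
      exact absurd (Real.rpow_lt_rpow hδ0.le h hq0) (not_lt.2 hb)
    -- main block is big
    have hbig : 1 - δ ≤ ‖R (ys i)‖ := by
      set M' := Nf (i+1) with hM'
      have hsum := lp.hasSum_norm hq0 (ys i)
      have htsum : (∑' k, ‖ys i k‖ ^ q) = 1 := by
        rw [hsum.tsum_eq]
        have h1 : ‖ys i‖ = 1 := hnorm (Nf i)
        rw [h1, Real.one_rpow]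
      have hsplit := Summable.sum_add_tsum_nat_add (f := fun k => ‖ys i k‖ ^ q) M' hsum.summable
      have hshift : (∑' k, ‖ys i (k + M')‖ ^ q) ≤ δ ^ q := by
        refine Summable.tsum_le_of_sum_le ((summable_nat_add_iff M').2 hsum.summable) ?_
        intro S'
        have himg : ∑ k ∈ S', ‖ys i (k + M')‖ ^ q
            = ∑ k ∈ S'.image (· + M'), ‖ys i k‖ ^ q := by
          rw [Finset.sum_image (by intro a _ b _ h; simp only at h; omega)]
        rw [himg]
        refine htail (Nf i) _ (fun k hk => ?_)
        obtain ⟨a, _, rfl⟩ := Finset.mem_image.1 hk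
        have h3 : M (Nf i) = Nf (i+1) := (hNfsucc i).symm
        have h4 : M' = Nf (i+1) := hM'
        omega
      have hrange : 1 - δ ^ q ≤ ∑ k ∈ Finset.range M', ‖ys i k‖ ^ q := by
        have := hsplit
        rw [htsum] at this
        linarith
      have hWsum : ∑ k ∈ W, ‖ys i k‖ ^ q = ∑ k ∈ Finset.range M', ‖ys i k‖ ^ q := by
        refine Finset.sum_subset ?_ ?_
        · intro k hk
          exact Finset.mem_range.2 (Finset.mem_Ico.1 hk).2
        · intro k hk hknot
          have hklt : k < Nf i := by
            have := Finset.mem_range.1 hk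
            simp only [hW, Finset.mem_Ico, not_and, not_lt] at hknot
            omega
          rw [hzero (Nf i) k hklt, norm_zero, Real.zero_rpow hq0.ne']
      have hRq : 1 - δ ^ q ≤ ‖R (ys i)‖ ^ q := by
        rw [hR, auxWin_rpow p hq0, hWsum]
        exact hrange
      have hδqδ : δ ^ q ≤ δ := by
        have h := Real.rpow_le_rpow_of_exponent_ge hδ0 (by linarith) hq1
        rwa [Real.rpow_one] at h
      by_contra h
      push_neg at h
      have h1δ : (0:ℝ) < 1 - δ := by linarith
      have h2 : ‖R (ys i)‖ ^ q < (1 - δ) ^ q :=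
        Real.rpow_lt_rpow (norm_nonneg _) h hq0
      have h3 : (1 - δ) ^ q ≤ 1 - δ := by
        have := Real.rpow_le_rpow_of_exponent_ge h1δ (by linarith) hq1
        rwa [Real.rpow_one] at this
      linarith
    -- combine
    have hsumsmall : ‖∑ j ∈ Finset.range i, ε j • R (ys j)‖ ≤ (n:ℝ) * δ := by
      calc ‖∑ j ∈ Finset.range i, ε j • R (ys j)‖
          ≤ ∑ j ∈ Finset.range i, ‖ε j • R (ys j)‖ := norm_sum_le _ _
        _ ≤ ∑ _j ∈ Finset.range i, δ := by
            refine Finset.sum_le_sum (fun j hj => ?_)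
            rw [norm_smul, hεn j, one_mul]
            exact hsmall j (Finset.mem_range.1 hj)
        _ = (i:ℝ) * δ := by rw [Finset.sum_const, Finset.card_range, nsmul_eq_mul]
        _ ≤ (n:ℝ) * δ := by
            have : (i:ℝ) ≤ n := by exact_mod_cast hi.le
            nlinarith
    have heq : ε i • R (ys i) = R x - ∑ j ∈ Finset.range i, ε j • R (ys j) := by
      rw [hRx]; exact (add_sub_cancel_left _ _).symm
    have h5 : ‖R (ys i)‖ ≤ ‖R x‖ + (n:ℝ) * δ := by
      have h6 : ‖ε i • R (ys i)‖ ≤ ‖R x‖ + ‖∑ j ∈ Finset.range i, ε j • R (ys j)‖ := by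
        rw [heq]; exact norm_sub_le _ _
      rw [norm_smul, hεn i, one_mul] at h6
      linarith
    have hnδ : ((n:ℝ) + 1) * δ = 1/2 := by
      rw [hδdef, mul_one_div, div_eq_div_iff (by positivity) (by norm_num)]; ring
    linarith
  -- global lower bound
  have hxlow : (n:ℝ) * (1/2) ^ q ≤ ‖x‖ ^ q := by
    have hdisj : (↑(Finset.range n) : Set ℕ).PairwiseDisjoint
        (fun i => Finset.Ico (Nf i) (Nf (i+1))) := by
      intro i _ j _ hij
      rcases hij.lt_or_gt with h | h
      · refine Finset.disjoint_left.2 (fun k hk hk' => ?_)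
        have h1 := (Finset.mem_Ico.1 hk).2
        have h2 := (Finset.mem_Ico.1 hk').1
        have h3 : Nf (i+1) ≤ Nf j := hNmono.monotone h
        omega
      · refine Finset.disjoint_left.2 (fun k hk hk' => ?_)
        have h1 := (Finset.mem_Ico.1 hk').2
        have h2 := (Finset.mem_Ico.1 hk).1
        have h3 : Nf (j+1) ≤ Nf i := hNmono.monotone h
        omega
    have hB : ∑ i ∈ Finset.range n, ∑ k ∈ Finset.Ico (Nf i) (Nf (i+1)), ‖x k‖ ^ q
        ≤ ‖x‖ ^ q := by
      rw [lp.norm_rpow_eq_tsum hq0, ← Finset.sum_biUnion hdisj]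
      exact Summable.sum_le_tsum _ (fun k _ => Real.rpow_nonneg (norm_nonneg _) _)
        ((lp.memℓp x).summable hq0)
    refine le_trans ?_ hB
    have hterm : ∀ i ∈ Finset.range n,
        (1/2:ℝ) ^ q ≤ ∑ k ∈ Finset.Ico (Nf i) (Nf (i+1)), ‖x k‖ ^ q := by
      intro i hi
      rw [← auxWin_rpow p hq0]
      exact Real.rpow_le_rpow (by norm_num) (hwin i (Finset.mem_range.1 hi)) hq0.le
    calc (n:ℝ) * (1/2) ^ q = ∑ _i ∈ Finset.range n, (1/2:ℝ) ^ q := by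
          rw [Finset.sum_const, Finset.card_range, nsmul_eq_mul]
      _ ≤ _ := Finset.sum_le_sum hterm
  have hn0 : (0:ℝ) < n := by exact_mod_cast hn1
  have hxge : (n:ℝ) ^ (1/q) * (1/2) ≤ ‖x‖ := by
    have h1 : ((n:ℝ) * (1/2) ^ q) ^ (1/q) ≤ (‖x‖ ^ q) ^ (1/q) :=
      Real.rpow_le_rpow (by positivity) hxlow (by positivity)
    have h2 : (‖x‖ ^ q) ^ (1/q) = ‖x‖ := by
      rw [← Real.rpow_mul (norm_nonneg _), mul_one_div, div_self hq0.ne', Real.rpow_one]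
    have h3 : ((n:ℝ) * (1/2) ^ q) ^ (1/q) = (n:ℝ) ^ (1/q) * (1/2) := by
      rw [Real.mul_rpow (by positivity) (by positivity),
        ← Real.rpow_mul (by norm_num : (0:ℝ) ≤ 1/2), mul_one_div, div_self hq0.ne',
        Real.rpow_one]
    rw [h3, h2] at h1
    exact h1
  -- final contradiction
  have h3 : c * ‖x‖ ≤ ‖T x‖ := hbelow x hxY
  have h4 : (c * ‖x‖) ^ 2 ≤ ‖T x‖ ^ 2 := pow_le_pow_left₀ (by positivity) h3 2
  have h5 : c ^ 2 * ‖x‖ ^ 2 ≤ (n:ℝ) * ‖T‖ ^ 2 := by nlinarith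
  have h6 : ((n:ℝ) ^ (1/q)) ^ 2 = (n:ℝ) ^ (2/q) := by
    rw [← Real.rpow_natCast ((n:ℝ) ^ (1/q)) 2, ← Real.rpow_mul hn0.le]
    norm_num
    ring_nf
  have h7 : (n:ℝ) ^ (2/q) = (n:ℝ) ^ (2/q - 1) * n := by
    have h := Real.rpow_add hn0 (2/q - 1) 1
    rw [Real.rpow_one] at h
    rw [← h]
    ring_nf
  have h8 : ((n:ℝ) ^ (1/q) * (1/2)) ^ 2 ≤ ‖x‖ ^ 2 := by
    have := pow_le_pow_left₀ (by positivity : (0:ℝ) ≤ (n:ℝ) ^ (1/q) * (1/2)) hxge 2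
    exact this
  have h9 : c ^ 2 * ((n:ℝ) ^ (2/q - 1) * n) * (1/4) ≤ (n:ℝ) * ‖T‖ ^ 2 := by
    have : ((n:ℝ) ^ (1/q) * (1/2)) ^ 2 = (n:ℝ) ^ (2/q - 1) * n * (1/4) := by
      rw [mul_pow, h6, h7]; norm_num
    nlinarith
  have h10 : c ^ 2 * (n:ℝ) ^ (2/q - 1) ≤ 4 * ‖T‖ ^ 2 := by
    have hdiv : c ^ 2 * ((n:ℝ) ^ (2/q - 1) * n) * (1/4) = (c ^ 2 * (n:ℝ) ^ (2/q-1) / 4) * n := by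
      ring
    rw [hdiv] at h9
    have := (div_le_div_iff_of_pos_right hn0).2 h9  -- maybe wrong lemma; use le_div_iff
    nlinarith [h9, hn0]
  have h11 : 4 * ‖T‖ ^ 2 < c ^ 2 * (n:ℝ) ^ (2/q - 1) := by
    rw [div_lt_iff₀ (by positivity : (0:ℝ) < c^2)] at hna
    nlinarith
  linarith
end

section
/- Let 1 ≤ q < p < ∞ and suppose {y_i} is a normalized block basis of the natural basis of Z_{q,p} = (⊕ ℓ_p)_{ℓ_q} such that there exist integers 0 = N_1 < N_2 < ⋯ with ‖(Q_{N_{i+1}} − Q_{N_i}) y_i‖ ≥ ε > 0 for all i, where Q_N is the projection onto the first N columns. Then for all finitely supported scalars {a_i}: ε(Σ|a_i|^q)^{1/q} ≤ ‖Σ a_i y_i‖ ≤ (Σ|a_i|^q)^{1/q}; in particular {y_i} is equivalent to the unit vector basis of ℓ_q. -/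
open scoped ENNReal NNReal

lemma myRpowAddLe {r : ℝ} (hr0 : 0 ≤ r) (hr1 : r ≤ 1)
    {x y : ℝ} (hx : 0 ≤ x) (hy : 0 ≤ y) : (x + y) ^ r ≤ x ^ r + y ^ r := by
  have h := NNReal.coe_le_coe.2 (NNReal.rpow_add_le_add_rpow x.toNNReal y.toNNReal hr0 hr1)
  push_cast at h
  rwa [Real.coe_toNNReal _ hx, Real.coe_toNNReal _ hy] at h

lemma myRpowSumLe {ι : Type*} (s : Finset ι) (f : ι → ℝ) (hf : ∀ i, 0 ≤ f i)
    {r : ℝ} (hr0 : 0 < r) (hr1 : r ≤ 1) :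
    (∑ i ∈ s, f i) ^ r ≤ ∑ i ∈ s, f i ^ r := by
  induction s using Finset.cons_induction with
  | empty => simp [Real.zero_rpow hr0.ne']
  | cons a s ha ih =>
    rw [Finset.sum_cons, Finset.sum_cons]
    calc (f a + ∑ i ∈ s, f i) ^ r ≤ f a ^ r + (∑ i ∈ s, f i) ^ r :=
          myRpowAddLe hr0.le hr1 (hf a) (Finset.sum_nonneg fun i _ => hf i)
      _ ≤ f a ^ r + ∑ i ∈ s, f i ^ r := by linarith

lemma myDisjNorm {p : ℝ≥0∞} [Fact (1 ≤ p)] (hp : 0 < p.toReal) {ι : Type*} (s : Finset ι)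
    (g : ι → lp (fun _ : ℕ => ℝ) p)
    (hdisj : ∀ u : ℕ, ∀ i ∈ s, ∀ i' ∈ s, i ≠ i' → g i u ≠ 0 → g i' u = 0) :
    ‖(∑ i ∈ s, g i : lp (fun _ : ℕ => ℝ) p)‖ ^ p.toReal = ∑ i ∈ s, ‖g i‖ ^ p.toReal := by
  rw [lp.norm_rpow_eq_tsum hp]
  have hpt : ∀ u : ℕ, ‖(∑ i ∈ s, g i : lp (fun _ : ℕ => ℝ) p) u‖ ^ p.toReal
      = ∑ i ∈ s, ‖g i u‖ ^ p.toReal := by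
    intro u
    have hco : (∑ i ∈ s, g i : lp (fun _ : ℕ => ℝ) p) u = ∑ i ∈ s, g i u := by
      rw [lp.coeFn_sum]; simp
    rw [hco]
    by_cases h : ∃ i ∈ s, g i u ≠ 0
    · obtain ⟨i0, hi0, h0⟩ := h
      rw [Finset.sum_eq_single_of_mem i0 hi0
          (fun b hb hne => hdisj u i0 hi0 b hb (fun he => hne he.symm) h0),
        Finset.sum_eq_single_of_mem i0 hi0
          (fun b hb hne => by
            rw [hdisj u i0 hi0 b hb (fun he => hne he.symm) h0, norm_zero,
              Real.zero_rpow hp.ne'])]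
    · push_neg at h
      rw [Finset.sum_eq_zero h, norm_zero, Real.zero_rpow hp.ne']
      exact (Finset.sum_eq_zero fun i hi => by
        rw [h i hi, norm_zero, Real.zero_rpow hp.ne']).symm
  rw [tsum_congr hpt, Summable.tsum_finsetSum (fun i _ => (lp.memℓp (g i)).summable hp)]
  exact Finset.sum_congr rfl fun i _ => (lp.norm_rpow_eq_tsum hp (g i)).symm

/-- Let `1 ≤ q < p < ∞` and let `{y_i}` be a normalized block basis of the natural
basis of `Z_{q,p} = (⊕ ℓ_p)_{ℓ_q}` (finitely supported vectors whose supports occupy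
pairwise disjoint consecutive sets of coordinates in the column-major ordering) such
that for some integers `0 = N_1 < N_2 < ⋯` one has `‖(Q_{N_{i+1}} − Q_{N_i}) y_i‖ ≥ ε`
for all `i`, where `Q_N` is the projection onto the first `N` columns. Then for all
finitely supported scalars, `ε (Σ|a_i|^q)^{1/q} ≤ ‖Σ a_i y_i‖ ≤ (Σ|a_i|^q)^{1/q}`;
in particular `{y_i}` is equivalent to the unit vector basis of `ℓ_q`. -/
theorem stmt_18 (p q : ℝ≥0∞) [Fact (1 ≤ p)] [Fact (1 ≤ q)]
    (hqp : q < p) (hp : p ≠ ⊤) (ε : ℝ) (hε : 0 < ε)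
    (y : ℕ → lp (fun _ : ℕ => lp (fun _ : ℕ => ℝ) p) q)
    (hnorm : ∀ i, ‖y i‖ = 1)
    (hfin : ∀ i, {ju : ℕ × ℕ | y i ju.1 ju.2 ≠ 0}.Finite)
    (hblock : ∀ i i', i < i' → ∀ j u j' u' : ℕ,
      y i j u ≠ 0 → y i' j' u' ≠ 0 → j < j' ∨ (j = j' ∧ u < u'))
    (N : ℕ → ℕ) (hN0 : N 0 = 0) (hNmono : StrictMono N)
    (htrunc : ∀ i, ε ≤ (∑ j ∈ Finset.Ico (N i) (N (i + 1)),
        ‖y i j‖ ^ q.toReal) ^ (1 / q.toReal)) :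
    ∀ (a : ℕ → ℝ) (s : Finset ℕ),
      ε * (∑ i ∈ s, |a i| ^ q.toReal) ^ (1 / q.toReal) ≤ ‖∑ i ∈ s, a i • y i‖ ∧
      ‖∑ i ∈ s, a i • y i‖ ≤ (∑ i ∈ s, |a i| ^ q.toReal) ^ (1 / q.toReal) := by
  intro a s
  have hqtop : q ≠ ⊤ := (hqp.trans_le le_top).ne
  have hq1 : (1 : ℝ≥0∞) ≤ q := Fact.out
  have hq0 : 0 < q.toReal :=
    ENNReal.toReal_pos (lt_of_lt_of_le zero_lt_one hq1).ne' hqtop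
  have hp0 : 0 < p.toReal :=
    ENNReal.toReal_pos (lt_of_lt_of_le zero_lt_one (Fact.out : (1:ℝ≥0∞) ≤ p)).ne' hp
  have hqppr : q.toReal < p.toReal := (ENNReal.toReal_lt_toReal hqtop hp).2 hqp
  set S : lp (fun _ : ℕ => lp (fun _ : ℕ => ℝ) p) q := ∑ i ∈ s, a i • y i with hSdef
  -- column identity
  have hSj : ∀ j : ℕ, (S j : lp (fun _ : ℕ => ℝ) p) = ∑ i ∈ s, a i • (y i j) := by
    intro j
    have h2 := congrFun (lp.coeFn_sum (fun i => a i • y i) s) j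
    rw [Finset.sum_apply] at h2
    rw [h2]
    exact Finset.sum_congr rfl fun i _ => by rw [lp.coeFn_smul]; rfl
  -- disjointness in each column
  have hdisj : ∀ j u : ℕ, ∀ i ∈ s, ∀ i' ∈ s, i ≠ i' →
      (a i • (y i j) : lp (fun _ : ℕ => ℝ) p) u ≠ 0 →
      (a i' • (y i' j) : lp (fun _ : ℕ => ℝ) p) u = 0 := by
    intro j u i _ i' _ hne hne0
    by_contra h0
    have h1 : y i j u ≠ 0 := by
      intro hz
      apply hne0
      show a i • (y i j u) = 0
      rw [hz, smul_zero]
    have h2 : y i' j u ≠ 0 := by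
      intro hz
      apply h0
      show a i' • (y i' j u) = 0
      rw [hz, smul_zero]
    rcases hne.lt_or_gt with h | h
    · rcases hblock i i' h j u j u h1 h2 with h' | ⟨_, h'⟩ <;> exact absurd h' (lt_irrefl _)
    · rcases hblock i' i h j u j u h2 h1 with h' | ⟨_, h'⟩ <;> exact absurd h' (lt_irrefl _)
  -- column norm formula
  have hcol : ∀ j : ℕ, ‖(S j : lp (fun _ : ℕ => ℝ) p)‖ ^ p.toReal
      = ∑ i ∈ s, (|a i| * ‖y i j‖) ^ p.toReal := by
    intro j
    rw [hSj j, myDisjNorm hp0 s _ (hdisj j)]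
    exact Finset.sum_congr rfl fun i _ => by rw [norm_smul, Real.norm_eq_abs]
  -- single term below
  have hrle : ∀ j : ℕ, ∀ i ∈ s, |a i| * ‖y i j‖ ≤ ‖(S j : lp (fun _ : ℕ => ℝ) p)‖ := by
    intro j i hi
    have h1 : (|a i| * ‖y i j‖) ^ p.toReal ≤ ‖(S j : lp (fun _ : ℕ => ℝ) p)‖ ^ p.toReal := by
      rw [hcol j]
      exact Finset.single_le_sum (f := fun i => (|a i| * ‖y i j‖) ^ p.toReal)
        (fun k _ => by positivity) hi
    exact (Real.rpow_le_rpow_iff (by positivity) (norm_nonneg _) hp0).1 h1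
  -- column q-norm upper bound
  have hcolq : ∀ j : ℕ, ‖(S j : lp (fun _ : ℕ => ℝ) p)‖ ^ q.toReal
      ≤ ∑ i ∈ s, (|a i| * ‖y i j‖) ^ q.toReal := by
    intro j
    have h2 : ‖(S j : lp (fun _ : ℕ => ℝ) p)‖ ^ q.toReal
        = (∑ i ∈ s, (|a i| * ‖y i j‖) ^ p.toReal) ^ (q.toReal / p.toReal) := by
      rw [← hcol j, ← Real.rpow_mul (norm_nonneg _),
        mul_div_cancel₀ _ hp0.ne']
    rw [h2]
    calc (∑ i ∈ s, (|a i| * ‖y i j‖) ^ p.toReal) ^ (q.toReal / p.toReal)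
        ≤ ∑ i ∈ s, ((|a i| * ‖y i j‖) ^ p.toReal) ^ (q.toReal / p.toReal) :=
          myRpowSumLe s _ (fun i => by positivity) (by positivity)
            (by rw [div_le_one hp0]; exact hqppr.le)
      _ = ∑ i ∈ s, (|a i| * ‖y i j‖) ^ q.toReal :=
          Finset.sum_congr rfl fun i _ => by
            rw [← Real.rpow_mul (by positivity), mul_div_cancel₀ _ hp0.ne']
  have hSsum : Summable fun j => ‖(S j : lp (fun _ : ℕ => ℝ) p)‖ ^ q.toReal :=
    (lp.memℓp S).summable hq0
  have hysum : ∀ i, Summable fun j => (|a i| * ‖y i j‖) ^ q.toReal := by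
    intro i
    refine (((lp.memℓp (y i)).summable hq0).mul_left (|a i| ^ q.toReal)).congr fun j => ?_
    rw [← Real.mul_rpow (abs_nonneg _) (norm_nonneg _)]
  -- upper bound for ‖S‖ ^ q
  have hupper_q : ‖S‖ ^ q.toReal ≤ ∑ i ∈ s, |a i| ^ q.toReal := by
    rw [lp.norm_rpow_eq_tsum hq0]
    calc ∑' j, ‖(S j : lp (fun _ : ℕ => ℝ) p)‖ ^ q.toReal
        ≤ ∑' j, ∑ i ∈ s, (|a i| * ‖y i j‖) ^ q.toReal :=
          Summable.tsum_le_tsum hcolq hSsum (summable_sum fun i _ => hysum i)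
      _ = ∑ i ∈ s, ∑' j, (|a i| * ‖y i j‖) ^ q.toReal := Summable.tsum_finsetSum fun i _ => hysum i
      _ = ∑ i ∈ s, |a i| ^ q.toReal := by
          refine Finset.sum_congr rfl fun i _ => ?_
          rw [tsum_congr (fun j =>
              Real.mul_rpow (abs_nonneg (a i)) (norm_nonneg (y i j))),
            tsum_mul_left, ← lp.norm_rpow_eq_tsum hq0 (y i), hnorm i, Real.one_rpow, mul_one]
  -- band estimate
  have hband : ∀ i ∈ s, ε ^ q.toReal * |a i| ^ q.toReal
      ≤ ∑ j ∈ Finset.Ico (N i) (N (i + 1)), ‖(S j : lp (fun _ : ℕ => ℝ) p)‖ ^ q.toReal := by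
    intro i hi
    have hεq : ε ^ q.toReal ≤ ∑ j ∈ Finset.Ico (N i) (N (i + 1)), ‖y i j‖ ^ q.toReal := by
      have hX : (0:ℝ) ≤ ∑ j ∈ Finset.Ico (N i) (N (i + 1)), ‖y i j‖ ^ q.toReal := by positivity
      have h := Real.rpow_le_rpow hε.le (htrunc i) hq0.le
      rwa [← Real.rpow_mul hX, one_div_mul_cancel hq0.ne', Real.rpow_one] at h
    calc ε ^ q.toReal * |a i| ^ q.toReal
        ≤ (∑ j ∈ Finset.Ico (N i) (N (i + 1)), ‖y i j‖ ^ q.toReal) * |a i| ^ q.toReal :=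
          mul_le_mul_of_nonneg_right hεq (by positivity)
      _ = ∑ j ∈ Finset.Ico (N i) (N (i + 1)), |a i| ^ q.toReal * ‖y i j‖ ^ q.toReal := by
          rw [Finset.sum_mul]; exact Finset.sum_congr rfl fun _ _ => mul_comm _ _
      _ ≤ ∑ j ∈ Finset.Ico (N i) (N (i + 1)), ‖(S j : lp (fun _ : ℕ => ℝ) p)‖ ^ q.toReal := by
          refine Finset.sum_le_sum fun j _ => ?_
          rw [← Real.mul_rpow (abs_nonneg _) (norm_nonneg _)]
          exact Real.rpow_le_rpow (by positivity) (hrle j i hi) hq0.le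
  -- lower bound for ‖S‖ ^ q
  have hpair : (↑s : Set ℕ).PairwiseDisjoint fun i => Finset.Ico (N i) (N (i + 1)) := by
    intro i _ i' _ hne
    simp only [Function.onFun]
    rw [Finset.disjoint_left]
    intro j hj hj'
    rw [Finset.mem_Ico] at hj hj'
    rcases hne.lt_or_gt with h | h
    · have : N (i + 1) ≤ N i' := hNmono.monotone (Nat.succ_le_of_lt h)
      omega
    · have : N (i' + 1) ≤ N i := hNmono.monotone (Nat.succ_le_of_lt h)
      omega
  have hlow_q : ε ^ q.toReal * ∑ i ∈ s, |a i| ^ q.toReal ≤ ‖S‖ ^ q.toReal := by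
    rw [lp.norm_rpow_eq_tsum hq0, Finset.mul_sum]
    calc ∑ i ∈ s, ε ^ q.toReal * |a i| ^ q.toReal
        ≤ ∑ i ∈ s, ∑ j ∈ Finset.Ico (N i) (N (i + 1)),
            ‖(S j : lp (fun _ : ℕ => ℝ) p)‖ ^ q.toReal := Finset.sum_le_sum hband
      _ = ∑ j ∈ s.biUnion (fun i => Finset.Ico (N i) (N (i + 1))),
            ‖(S j : lp (fun _ : ℕ => ℝ) p)‖ ^ q.toReal := (Finset.sum_biUnion hpair).symm
      _ ≤ ∑' j, ‖(S j : lp (fun _ : ℕ => ℝ) p)‖ ^ q.toReal :=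
          Summable.sum_le_tsum _ (fun j _ => by positivity) hSsum
  constructor
  · have h := Real.rpow_le_rpow (by positivity) hlow_q
      (le_of_lt (by positivity : (0:ℝ) < 1 / q.toReal))
    rwa [Real.mul_rpow (by positivity) (by positivity),
      ← Real.rpow_mul hε.le, mul_one_div_cancel hq0.ne', Real.rpow_one,
      ← Real.rpow_mul (norm_nonneg _), mul_one_div_cancel hq0.ne', Real.rpow_one] at h
  · have h := Real.rpow_le_rpow (by positivity) hupper_q
      (le_of_lt (by positivity : (0:ℝ) < 1 / q.toReal))
    rwa [← Real.rpow_mul (norm_nonneg _), mul_one_div_cancel hq0.ne', Real.rpow_one] at h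
end
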